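/- arXiv:2302.14792 — 4 statements merged into one kernel-verified Lean document; each statement's English description precedes it below -/
import Mathlib

section
/- Let Q be a quiver of type A_n (n ≥ 2), θ : ℤⁿ → ℝ a linear stability function, and F(k) = Σ_{0<i≤k} θ(dim S_i) for 0 ≤ k ≤ n. For 0 ≤ a < b ≤ n, the interval representation M_{(a,b]} is θ-semistable if and only if: (1) F(a) = F(b); (2) F(x) ≤ F(a) for every x with a < x < b such that the arrow α_x points left; and (3) F(y) ≥ F(b) for every y with a < y < b such that the arrow α_y points right. Furthermore, if all the inequalities in (2) and (3) are strict, then M_{(a,b]} is θ-stable. -/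
/-!
Stability for quivers of type `Aₙ` (vertices `1, …, n`; for `1 ≤ x ≤ n-1` the arrow `α_x`
joins `x` and `x+1`, and `pointsLeft x` means that it goes from `x+1` to `x`).

Since each space of the interval representation `M_{(a,b]}` is either `k` or `0`, we model it
by the family of subspaces of `k` which are `⊤` on `(a,b]` and `⊥` elsewhere, with identity
structure maps inside the support.  A subrepresentation is a family of subspaces of these
spaces preserved by the structure maps (preservation is automatic for the zero maps, and for
the identity maps it amounts to an inclusion of subspaces in the direction of the arrow).
-/

noncomputable section

/-- A subrepresentation `M′ ⊆ M_{(a,b]}`. -/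
structure IntervalSubrep (k : Type*) [Field k] (n : ℕ) (pointsLeft : ℕ → Prop)
    (a b : ℕ) where
  /-- the subspace of `M_{(a,b]}(i)` at the vertex `i` -/
  U : ℕ → Submodule k k
  zero_outside : ∀ i : ℕ, ¬(a < i ∧ i ≤ b) → U i = ⊥
  pres_left : ∀ x : ℕ, 1 ≤ x → x ≤ n - 1 → a < x → x + 1 ≤ b → pointsLeft x →
    U (x + 1) ≤ U x
  pres_right : ∀ x : ℕ, 1 ≤ x → x ≤ n - 1 → a < x → x + 1 ≤ b → ¬ pointsLeft x →
    U x ≤ U (x + 1)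

/-- The dimension vector of `M_{(a,b]}`:  `1` exactly on the vertices `a < i ≤ b`
(the vertex `i ∈ {1, …, n}` corresponds to the index `i - 1 : Fin n`). -/
def dimInterval (n a b : ℕ) : Fin n → ℤ :=
  fun i => if a < (i : ℕ) + 1 ∧ (i : ℕ) + 1 ≤ b then 1 else 0

/-- The dimension vector of a subrepresentation of `M_{(a,b]}`. -/
def subrepDim {k : Type*} [Field k] {n : ℕ} {pointsLeft : ℕ → Prop} {a b : ℕ}
    (M : IntervalSubrep k n pointsLeft a b) : Fin n → ℤ :=
  fun i => (Module.finrank k (M.U ((i : ℕ) + 1)) : ℤ)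

/-- `M_{(a,b]}` is `θ`-semistable:  `θ(dim M) = 0` and `θ(dim M′) ≤ 0` for every
subrepresentation `M′ ⊆ M_{(a,b]}`. -/
def IsSemistable (k : Type*) [Field k] (n : ℕ) (pointsLeft : ℕ → Prop)
    (θ : (Fin n → ℤ) →+ ℝ) (a b : ℕ) : Prop :=
  θ (dimInterval n a b) = 0 ∧
  ∀ M : IntervalSubrep k n pointsLeft a b, θ (subrepDim M) ≤ 0

/-- `M_{(a,b]}` is `θ`-stable:  in addition `θ(dim M′) < 0` for every subrepresentation
with `0 ≠ M′ ⊊ M_{(a,b]}`. -/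
def IsStable (k : Type*) [Field k] (n : ℕ) (pointsLeft : ℕ → Prop)
    (θ : (Fin n → ℤ) →+ ℝ) (a b : ℕ) : Prop :=
  IsSemistable k n pointsLeft θ a b ∧
  ∀ M : IntervalSubrep k n pointsLeft a b,
    (∃ i : ℕ, M.U i ≠ ⊥) → (∃ i : ℕ, a < i ∧ i ≤ b ∧ M.U i ≠ ⊤) →
      θ (subrepDim M) < 0

namespace SemistableAux

variable {k : Type*} [Field k] {n : ℕ} {pointsLeft : ℕ → Prop} {a b : ℕ}

lemma dimInterval_eq_sum (n c d : ℕ) :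
    dimInterval n c d = ∑ i ∈ Finset.Ioc c d, dimInterval n (i - 1) i := by
  funext j
  rw [Finset.sum_apply]
  have h1 : ∀ i ∈ Finset.Ioc c d, dimInterval n (i - 1) i j
      = if i = (j : ℕ) + 1 then (1 : ℤ) else 0 := by
    intro i _
    simp only [dimInterval]
    have h : (i - 1 < (j : ℕ) + 1 ∧ (j : ℕ) + 1 ≤ i) ↔ i = (j : ℕ) + 1 := by omega
    split_ifs <;> omega
  rw [Finset.sum_congr rfl h1, Finset.sum_ite_eq' _ ((j : ℕ) + 1) (fun _ => (1 : ℤ))]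
  simp [dimInterval, Finset.mem_Ioc]

lemma theta_dimInterval (θ : (Fin n → ℤ) →+ ℝ) (F : ℕ → ℝ)
    (hF : ∀ m : ℕ, F m = ∑ i ∈ Finset.Icc 1 m, θ (dimInterval n (i - 1) i))
    {c d : ℕ} (hcd : c ≤ d) :
    θ (dimInterval n c d) = F d - F c := by
  rw [dimInterval_eq_sum, map_sum, hF, hF,
    show Finset.Icc 1 d = Finset.Ioc 0 d from rfl,
    show Finset.Icc 1 c = Finset.Ioc 0 c from rfl,
    ← Finset.sum_Ioc_consecutive (fun i => θ (dimInterval n (i - 1) i)) (Nat.zero_le c) hcd]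
  ring

lemma subrepDim_eq_sum (M : IntervalSubrep k n pointsLeft a b) :
    subrepDim M = ∑ i ∈ Finset.Ioc a b,
      (Module.finrank k (M.U i) : ℤ) • dimInterval n (i - 1) i := by
  funext j
  rw [Finset.sum_apply]
  have h1 : ∀ i ∈ Finset.Ioc a b,
      ((Module.finrank k (M.U i) : ℤ) • dimInterval n (i - 1) i) j
        = if i = (j : ℕ) + 1 then (Module.finrank k (M.U i) : ℤ) else 0 := by
    intro i _
    simp only [Pi.smul_apply, dimInterval, smul_eq_mul]
    have h : (i - 1 < (j : ℕ) + 1 ∧ (j : ℕ) + 1 ≤ i) ↔ i = (j : ℕ) + 1 := by omega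
    by_cases hc : i = (j : ℕ) + 1 <;> simp [h, hc]
    intro h1 h2; omega
  rw [Finset.sum_congr rfl h1, Finset.sum_ite_eq']
  by_cases hm : ((j : ℕ) + 1) ∈ Finset.Ioc a b
  · simp [hm, subrepDim]
  · simp only [hm, if_false, subrepDim]
    rw [M.zero_outside _ (by simpa [Finset.mem_Ioc] using hm)]
    simp

lemma theta_subrepDim (θ : (Fin n → ℤ) →+ ℝ) (F : ℕ → ℝ)
    (hF : ∀ m : ℕ, F m = ∑ i ∈ Finset.Icc 1 m, θ (dimInterval n (i - 1) i))
    (M : IntervalSubrep k n pointsLeft a b) :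
    θ (subrepDim M) = ∑ i ∈ Finset.Ioc a b,
      (Module.finrank k (M.U i) : ℝ) * (F i - F (i - 1)) := by
  rw [subrepDim_eq_sum, map_sum]
  refine Finset.sum_congr rfl fun i _ => ?_
  rw [map_zsmul, theta_dimInterval θ F hF (Nat.sub_le i 1), zsmul_eq_mul]
  push_cast
  ring

lemma chi_top {M : IntervalSubrep k n pointsLeft a b} {i : ℕ} (h : M.U i = ⊤) :
    (Module.finrank k (M.U i) : ℝ) = 1 := by
  rw [h]; simp

lemma chi_bot {M : IntervalSubrep k n pointsLeft a b} {i : ℕ} (h : M.U i = ⊥) :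
    (Module.finrank k (M.U i) : ℝ) = 0 := by
  rw [h]; simp

lemma top_not_le_bot : ¬ ((⊤ : Submodule k k) ≤ ⊥) := by
  intro h
  exact absurd (le_bot_iff.mp h) top_ne_bot

lemma step_weak (F : ℕ → ℝ) (hbn : b ≤ n) (hFab : F a = F b)
    (hleft : ∀ x : ℕ, a < x → x < b → pointsLeft x → F x ≤ F a)
    (hright : ∀ y : ℕ, a < y → y < b → ¬ pointsLeft y → F b ≤ F y)
    (M : IntervalSubrep k n pointsLeft a b) (d : ℕ) (had : a ≤ d) (hdb : d + 1 ≤ b) :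
    (Module.finrank k (M.U d) : ℝ) * (F d - F a)
      ≤ (Module.finrank k (M.U (d + 1)) : ℝ) * (F d - F a) := by
  rcases eq_or_lt_of_le had with rfl | had'
  · simp
  · have hd1 : 1 ≤ d := by omega
    have hdn : d ≤ n - 1 := by omega
    rcases eq_bot_or_eq_top (M.U d) with h1 | h1 <;>
      rcases eq_bot_or_eq_top (M.U (d + 1)) with h2 | h2
    · rw [h1, h2]
    · have hnl : ¬ pointsLeft d := by
        intro hl
        have := M.pres_left d hd1 hdn had' hdb hl
        rw [h1, h2] at this
        exact top_not_le_bot this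
      have hFd := hright d had' (by omega) hnl
      rw [chi_bot h1, chi_top h2]
      nlinarith
    · have hl : pointsLeft d := by
        by_contra hnl
        have := M.pres_right d hd1 hdn had' hdb hnl
        rw [h1, h2] at this
        exact top_not_le_bot this
      have hFd := hleft d had' (by omega) hl
      rw [chi_bot h2, chi_top h1]
      nlinarith
    · rw [h1, h2]

lemma step_strict (F : ℕ → ℝ) (hbn : b ≤ n) (hFab : F a = F b)
    (hleft : ∀ x : ℕ, a < x → x < b → pointsLeft x → F x < F a)
    (hright : ∀ y : ℕ, a < y → y < b → ¬ pointsLeft y → F b < F y)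
    (M : IntervalSubrep k n pointsLeft a b) (d : ℕ) (had : a < d) (hdb : d + 1 ≤ b)
    (hne : M.U d ≠ M.U (d + 1)) :
    (Module.finrank k (M.U d) : ℝ) * (F d - F a)
      < (Module.finrank k (M.U (d + 1)) : ℝ) * (F d - F a) := by
  have hd1 : 1 ≤ d := by omega
  have hdn : d ≤ n - 1 := by omega
  rcases eq_bot_or_eq_top (M.U d) with h1 | h1 <;>
    rcases eq_bot_or_eq_top (M.U (d + 1)) with h2 | h2
  · exact absurd (h1.trans h2.symm) hne
  · have hnl : ¬ pointsLeft d := by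
      intro hl
      have := M.pres_left d hd1 hdn had hdb hl
      rw [h1, h2] at this
      exact top_not_le_bot this
    have hFd := hright d had (by omega) hnl
    rw [chi_bot h1, chi_top h2]
    nlinarith
  · have hl : pointsLeft d := by
      by_contra hnl
      have := M.pres_right d hd1 hdn had hdb hnl
      rw [h1, h2] at this
      exact top_not_le_bot this
    have hFd := hleft d had (by omega) hl
    rw [chi_bot h2, chi_top h1]
    nlinarith
  · exact absurd (h1.trans h2.symm) hne

lemma sum_le (F : ℕ → ℝ) (hbn : b ≤ n) (hFab : F a = F b)
    (hleft : ∀ x : ℕ, a < x → x < b → pointsLeft x → F x ≤ F a)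
    (hright : ∀ y : ℕ, a < y → y < b → ¬ pointsLeft y → F b ≤ F y)
    (M : IntervalSubrep k n pointsLeft a b) :
    ∀ d, a ≤ d → d ≤ b →
      (∑ i ∈ Finset.Ioc a d, (Module.finrank k (M.U i) : ℝ) * (F i - F (i - 1)))
        ≤ (Module.finrank k (M.U d) : ℝ) * (F d - F a) := by
  intro d had
  induction d, had using Nat.le_induction with
  | base => intro _; simp
  | succ d had ih =>
    intro hdb
    have hdb' : d ≤ b := by omega
    rw [Finset.sum_Ioc_succ_top had, show d + 1 - 1 = d from rfl]
    have h1 := ih hdb'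
    have h2 := step_weak F hbn hFab hleft hright M d had hdb
    have h3 : (Module.finrank k (M.U (d + 1)) : ℝ) * (F (d + 1) - F a)
        = (Module.finrank k (M.U (d + 1)) : ℝ) * (F d - F a)
          + (Module.finrank k (M.U (d + 1)) : ℝ) * (F (d + 1) - F d) := by ring
    rw [h3]
    linarith

lemma sum_lt (F : ℕ → ℝ) (hbn : b ≤ n) (hFab : F a = F b)
    (hleft : ∀ x : ℕ, a < x → x < b → pointsLeft x → F x < F a)
    (hright : ∀ y : ℕ, a < y → y < b → ¬ pointsLeft y → F b < F y)
    (M : IntervalSubrep k n pointsLeft a b) :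
    ∀ d, a ≤ d → d ≤ b →
      (∃ i ∈ Finset.Ioc a d, M.U i = ⊤) → (∃ j ∈ Finset.Ioc a d, M.U j = ⊥) →
      (∑ i ∈ Finset.Ioc a d, (Module.finrank k (M.U i) : ℝ) * (F i - F (i - 1)))
        < (Module.finrank k (M.U d) : ℝ) * (F d - F a) := by
  have hleft' : ∀ x : ℕ, a < x → x < b → pointsLeft x → F x ≤ F a :=
    fun x h1 h2 h3 => le_of_lt (hleft x h1 h2 h3)
  have hright' : ∀ y : ℕ, a < y → y < b → ¬ pointsLeft y → F b ≤ F y :=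
    fun y h1 h2 h3 => le_of_lt (hright y h1 h2 h3)
  intro d had
  induction d, had using Nat.le_induction with
  | base =>
    intro _ hi _
    rcases hi with ⟨i, hi, _⟩
    simp at hi
  | succ d had ih =>
    intro hdb hi hj
    rcases hi with ⟨i, hi_mem, hi_top⟩
    rcases hj with ⟨j, hj_mem, hj_bot⟩
    simp only [Finset.mem_Ioc] at hi_mem hj_mem
    have hij : i ≠ j := by
      intro h
      rw [h, hj_bot] at hi_top
      exact bot_ne_top hi_top
    have had' : a < d := by omega
    have hdb' : d ≤ b := by omega
    -- key strict inequality for the partial sum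
    have hkey : (∑ i ∈ Finset.Ioc a d, (Module.finrank k (M.U i) : ℝ) * (F i - F (i - 1)))
        < (Module.finrank k (M.U (d + 1)) : ℝ) * (F d - F a) := by
      by_cases hA : (∃ i ∈ Finset.Ioc a d, M.U i = ⊤) ∧ (∃ j ∈ Finset.Ioc a d, M.U j = ⊥)
      · exact lt_of_lt_of_le (ih hdb' hA.1 hA.2)
          (step_weak F hbn hFab hleft' hright' M d (le_of_lt had') hdb)
      · have hne : M.U d ≠ M.U (d + 1) := by
          intro heq
          apply hA
          constructor
          · by_cases hcase : i ≤ d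
            · exact ⟨i, Finset.mem_Ioc.mpr ⟨hi_mem.1, hcase⟩, hi_top⟩
            · have : i = d + 1 := by omega
              exact ⟨d, Finset.mem_Ioc.mpr ⟨had', le_rfl⟩, by rw [heq, ← this]; exact hi_top⟩
          · by_cases hcase : j ≤ d
            · exact ⟨j, Finset.mem_Ioc.mpr ⟨hj_mem.1, hcase⟩, hj_bot⟩
            · have : j = d + 1 := by omega
              exact ⟨d, Finset.mem_Ioc.mpr ⟨had', le_rfl⟩, by rw [heq, ← this]; exact hj_bot⟩
        exact lt_of_le_of_lt
          (sum_le F hbn hFab hleft' hright' M d (le_of_lt had') hdb')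
          (step_strict F hbn hFab hleft hright M d had' hdb hne)
    rw [Finset.sum_Ioc_succ_top (le_of_lt (lt_of_lt_of_le had' (le_refl d)))]
    · rw [show d + 1 - 1 = d from rfl]
      have h3 : (Module.finrank k (M.U (d + 1)) : ℝ) * (F (d + 1) - F a)
          = (Module.finrank k (M.U (d + 1)) : ℝ) * (F d - F a)
            + (Module.finrank k (M.U (d + 1)) : ℝ) * (F (d + 1) - F d) := by ring
      rw [h3]
      linarith

/-- The subrepresentation supported on `(c, d]`. -/
def mkSubrep (k : Type*) [Field k] (n : ℕ) (pointsLeft : ℕ → Prop) (a b c d : ℕ)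
    (hac : a ≤ c) (hdb : d ≤ b)
    (hc : c = a ∨ ¬ pointsLeft c) (hd : d = b ∨ pointsLeft d) :
    IntervalSubrep k n pointsLeft a b where
  U i := if c < i ∧ i ≤ d then ⊤ else ⊥
  zero_outside i hi := by
    have h : ¬ (c < i ∧ i ≤ d) := by omega
    simp [h]
  pres_left x _ _ hax _ hl := by
    split_ifs with h1 h2
    · exact le_rfl
    · exfalso
      have hxc : x = c := by omega
      rcases hc with rfl | hnc
      · omega
      · exact hnc (hxc ▸ hl)
    · exact bot_le
    · exact bot_le
  pres_right x _ _ _ hxb hnl := by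
    split_ifs with h1 h2
    · exact le_rfl
    · exfalso
      have hxd : x = d := by omega
      rcases hd with rfl | hpd
      · omega
      · exact hnl (hxd ▸ hpd)
    · exact bot_le
    · exact bot_le

lemma subrepDim_mkSubrep (hac : a ≤ c) (hdb : d ≤ b)
    (hc : c = a ∨ ¬ pointsLeft c) (hd : d = b ∨ pointsLeft d) :
    subrepDim (mkSubrep k n pointsLeft a b c d hac hdb hc hd) = dimInterval n c d := by
  funext j
  simp only [subrepDim, dimInterval]
  split_ifs with h
  · rw [show (mkSubrep k n pointsLeft a b c d hac hdb hc hd).U ((j : ℕ) + 1) = ⊤ from if_pos h]; simp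
  · rw [show (mkSubrep k n pointsLeft a b c d hac hdb hc hd).U ((j : ℕ) + 1) = ⊥ from if_neg h]; simp

end SemistableAux

/-- Proposition 1.1:  with `F k = θ(dim M_{(0,k]}) = ∑_{0 < i ≤ k} θ(dim Sᵢ)`,
the module `M_{(a,b]}` is `θ`-semistable iff `F a = F b`, `F x ≤ F a` whenever `α_x`
points left and `a < x < b`, and `F y ≥ F b` whenever `α_y` points right and `a < y < b`;
and if all these inequalities are strict then `M_{(a,b]}` is `θ`-stable. -/
theorem semistable_iff_F (k : Type*) [Field k] (n : ℕ) (hn : 2 ≤ n)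
    (pointsLeft : ℕ → Prop) (θ : (Fin n → ℤ) →+ ℝ)
    (F : ℕ → ℝ) (hF : ∀ m : ℕ, F m = ∑ i ∈ Finset.Icc 1 m, θ (dimInterval n (i - 1) i))
    (a b : ℕ) (hab : a < b) (hbn : b ≤ n) :
    (IsSemistable k n pointsLeft θ a b ↔
      (F a = F b ∧
        (∀ x : ℕ, a < x → x < b → pointsLeft x → F x ≤ F a) ∧
        (∀ y : ℕ, a < y → y < b → ¬ pointsLeft y → F b ≤ F y))) ∧
    ((F a = F b ∧
        (∀ x : ℕ, a < x → x < b → pointsLeft x → F x < F a) ∧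
        (∀ y : ℕ, a < y → y < b → ¬ pointsLeft y → F b < F y)) →
      IsStable k n pointsLeft θ a b) := by
  constructor
  · constructor
    · intro hss
      have h0 : F a = F b := by
        have h := hss.1
        rw [SemistableAux.theta_dimInterval θ F hF (le_of_lt hab)] at h
        linarith
      refine ⟨h0, ?_, ?_⟩
      · intro x hax hxb hl
        have h := hss.2 (SemistableAux.mkSubrep k n pointsLeft a b a x le_rfl
          (le_of_lt hxb) (Or.inl rfl) (Or.inr hl))
        rw [SemistableAux.subrepDim_mkSubrep _ _ _ _,
          SemistableAux.theta_dimInterval θ F hF (le_of_lt hax)] at h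
        linarith
      · intro y hay hyb hr
        have h := hss.2 (SemistableAux.mkSubrep k n pointsLeft a b y b
          (le_of_lt hay) le_rfl (Or.inr hr) (Or.inl rfl))
        rw [SemistableAux.subrepDim_mkSubrep _ _ _ _,
          SemistableAux.theta_dimInterval θ F hF (le_of_lt hyb)] at h
        linarith
    · rintro ⟨h0, hsl, hsr⟩
      constructor
      · rw [SemistableAux.theta_dimInterval θ F hF (le_of_lt hab)]; linarith
      · intro M
        rw [SemistableAux.theta_subrepDim θ F hF M]
        have h := SemistableAux.sum_le F hbn h0 hsl hsr M b (le_of_lt hab) le_rfl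
        have h2 : (Module.finrank k (M.U b) : ℝ) * (F b - F a) = 0 := by
          rw [show F b - F a = 0 by linarith]; ring
        linarith
  · rintro ⟨h0, hsl, hsr⟩
    have hsl' : ∀ x : ℕ, a < x → x < b → pointsLeft x → F x ≤ F a :=
      fun x h1 h2 h3 => le_of_lt (hsl x h1 h2 h3)
    have hsr' : ∀ y : ℕ, a < y → y < b → ¬ pointsLeft y → F b ≤ F y :=
      fun y h1 h2 h3 => le_of_lt (hsr y h1 h2 h3)
    constructor
    · constructor
      · rw [SemistableAux.theta_dimInterval θ F hF (le_of_lt hab)]; linarith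
      · intro M
        rw [SemistableAux.theta_subrepDim θ F hF M]
        have h := SemistableAux.sum_le F hbn h0 hsl' hsr' M b (le_of_lt hab) le_rfl
        have h2 : (Module.finrank k (M.U b) : ℝ) * (F b - F a) = 0 := by
          rw [show F b - F a = 0 by linarith]; ring
        linarith
    · rintro M ⟨i, hib⟩ ⟨j, haj, hjb, hjt⟩
      have hi_mem : a < i ∧ i ≤ b := by
        by_contra h
        exact hib (M.zero_outside i h)
      have hi_top : M.U i = ⊤ := (eq_bot_or_eq_top _).resolve_left hib
      have hj_bot : M.U j = ⊥ := (eq_bot_or_eq_top _).resolve_right hjt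
      rw [SemistableAux.theta_subrepDim θ F hF M]
      have h := SemistableAux.sum_lt F hbn h0 hsl hsr M b (le_of_lt hab) le_rfl
        ⟨i, Finset.mem_Ioc.mpr hi_mem, hi_top⟩ ⟨j, Finset.mem_Ioc.mpr ⟨haj, hjb⟩, hj_bot⟩
      have h2 : (Module.finrank k (M.U b) : ℝ) * (F b - F a) = 0 := by
        rw [show F b - F a = 0 by linarith]; ring
      linarith


end
end

section
/- Let F be a useful function with decomposition F = f + Σ_{x∈ℝ} u_x⁻ Δx⁻ + Σ_{x∈ℝ} u_x⁺ Δx⁺ and let a ∈ ℝ. Then: (1) the left limit lim_{x→a⁻} F(x) exists; (2) the right limit lim_{x→a⁺} F(x) exists; (3) F(a) = lim_{x→a⁻} F(x) + u_a⁻ and F(a) + u_a⁺ = lim_{x→a⁺} F(x). Moreover the limits lim_{x→−∞} F(x) and lim_{x→+∞} F(x) exist. -/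
/-!
Useful functions:  `F = f + ∑_{x ∈ ℝ} u_x⁻ Δx⁻ + ∑_{x ∈ ℝ} u_x⁺ Δx⁺` where `f` is continuous
of bounded variation, `Δx⁻`/`Δx⁺` are the indicator functions of `[x,∞)`/`(x,∞)`, and the
coefficient families are absolutely summable.
-/

noncomputable section

open Filter Topology

/-- `Δx⁻`, the indicator function of `[x, ∞)`. -/
def deltaMinus (x : ℝ) : ℝ → ℝ := Set.indicator (Set.Ici x) 1

/-- `Δx⁺`, the indicator function of `(x, ∞)`. -/
def deltaPlus (x : ℝ) : ℝ → ℝ := Set.indicator (Set.Ioi x) 1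

/-- `F` is a useful function, with decomposition data `f` (continuous of bounded variation)
and coefficient families `um = (u_x⁻)`, `up = (u_x⁺)`. -/
structure IsUseful (F f um up : ℝ → ℝ) : Prop where
  cont : Continuous f
  bddVar : BoundedVariationOn f Set.univ
  summable_um : Summable fun x : ℝ => |um x|
  summable_up : Summable fun x : ℝ => |up x|
  decomp : ∀ t : ℝ,
    F t = f t + (∑' x : ℝ, um x * deltaMinus x t) + (∑' x : ℝ, up x * deltaPlus x t)

lemma deltaMinus_apply (x t : ℝ) : deltaMinus x t = if x ≤ t then 1 else 0 := by
  simp [deltaMinus, Set.indicator_apply, Set.mem_Ici]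

lemma deltaPlus_apply (x t : ℝ) : deltaPlus x t = if x < t then 1 else 0 := by
  simp [deltaPlus, Set.indicator_apply, Set.mem_Ioi]

lemma abs_deltaMinus_le (x t : ℝ) : |deltaMinus x t| ≤ 1 := by
  rw [deltaMinus_apply]; split <;> norm_num

lemma abs_deltaPlus_le (x t : ℝ) : |deltaPlus x t| ≤ 1 := by
  rw [deltaPlus_apply]; split <;> norm_num

lemma tendsto_deltaMinus_left (x a : ℝ) :
    Tendsto (deltaMinus x) (nhdsWithin a (Set.Iio a)) (nhds (deltaPlus x a)) := by
  rcases lt_or_ge x a with hx | hx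
  · have hmem : Set.Ioo x a ∈ nhdsWithin a (Set.Iio a) :=
      Ioo_mem_nhdsLT_of_mem ⟨hx, le_rfl⟩
    have : deltaPlus x a = 1 := by rw [deltaPlus_apply, if_pos hx]
    rw [this]
    refine Tendsto.congr' ?_ tendsto_const_nhds
    filter_upwards [hmem] with t ht
    rw [deltaMinus_apply, if_pos ht.1.le]
  · have : deltaPlus x a = 0 := by rw [deltaPlus_apply, if_neg (not_lt.mpr hx)]
    rw [this]
    refine Tendsto.congr' ?_ tendsto_const_nhds
    filter_upwards [self_mem_nhdsWithin] with t (ht : t < a)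
    rw [deltaMinus_apply, if_neg (not_le.mpr (lt_of_lt_of_le ht hx))]

lemma tendsto_deltaPlus_left (x a : ℝ) :
    Tendsto (deltaPlus x) (nhdsWithin a (Set.Iio a)) (nhds (deltaPlus x a)) := by
  rcases lt_or_ge x a with hx | hx
  · have hmem : Set.Ioo x a ∈ nhdsWithin a (Set.Iio a) :=
      Ioo_mem_nhdsLT_of_mem ⟨hx, le_rfl⟩
    have : deltaPlus x a = 1 := by rw [deltaPlus_apply, if_pos hx]
    rw [this]
    refine Tendsto.congr' ?_ tendsto_const_nhds
    filter_upwards [hmem] with t ht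
    rw [deltaPlus_apply, if_pos ht.1]
  · have : deltaPlus x a = 0 := by rw [deltaPlus_apply, if_neg (not_lt.mpr hx)]
    rw [this]
    refine Tendsto.congr' ?_ tendsto_const_nhds
    filter_upwards [self_mem_nhdsWithin] with t (ht : t < a)
    rw [deltaPlus_apply, if_neg (not_lt.mpr (le_of_lt (lt_of_lt_of_le ht hx)))]

lemma tendsto_deltaMinus_right (x a : ℝ) :
    Tendsto (deltaMinus x) (nhdsWithin a (Set.Ioi a)) (nhds (deltaMinus x a)) := by
  rcases le_or_gt x a with hx | hx
  · have : deltaMinus x a = 1 := by rw [deltaMinus_apply, if_pos hx]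
    rw [this]
    refine Tendsto.congr' ?_ tendsto_const_nhds
    filter_upwards [self_mem_nhdsWithin] with t (ht : a < t)
    rw [deltaMinus_apply, if_pos (hx.trans ht.le)]
  · have hmem : Set.Ioo a x ∈ nhdsWithin a (Set.Ioi a) :=
      Ioo_mem_nhdsGT_of_mem ⟨le_rfl, hx⟩
    have : deltaMinus x a = 0 := by rw [deltaMinus_apply, if_neg (not_le.mpr hx)]
    rw [this]
    refine Tendsto.congr' ?_ tendsto_const_nhds
    filter_upwards [hmem] with t ht
    rw [deltaMinus_apply, if_neg (not_le.mpr ht.2)]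

lemma tendsto_deltaPlus_right (x a : ℝ) :
    Tendsto (deltaPlus x) (nhdsWithin a (Set.Ioi a)) (nhds (deltaMinus x a)) := by
  rcases le_or_gt x a with hx | hx
  · have : deltaMinus x a = 1 := by rw [deltaMinus_apply, if_pos hx]
    rw [this]
    refine Tendsto.congr' ?_ tendsto_const_nhds
    filter_upwards [self_mem_nhdsWithin] with t (ht : a < t)
    rw [deltaPlus_apply, if_pos (lt_of_le_of_lt hx ht)]
  · have hmem : Set.Ioo a x ∈ nhdsWithin a (Set.Ioi a) :=
      Ioo_mem_nhdsGT_of_mem ⟨le_rfl, hx⟩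
    have : deltaMinus x a = 0 := by rw [deltaMinus_apply, if_neg (not_le.mpr hx)]
    rw [this]
    refine Tendsto.congr' ?_ tendsto_const_nhds
    filter_upwards [hmem] with t ht
    rw [deltaPlus_apply, if_neg (not_lt.mpr ht.2.le)]

lemma tendsto_deltaMinus_atBot (x : ℝ) :
    Tendsto (deltaMinus x) atBot (nhds 0) := by
  refine Tendsto.congr' ?_ tendsto_const_nhds
  filter_upwards [eventually_lt_atBot x] with t ht
  rw [deltaMinus_apply, if_neg (not_le.mpr ht)]

lemma tendsto_deltaPlus_atBot (x : ℝ) :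
    Tendsto (deltaPlus x) atBot (nhds 0) := by
  refine Tendsto.congr' ?_ tendsto_const_nhds
  filter_upwards [eventually_lt_atBot x] with t ht
  rw [deltaPlus_apply, if_neg (not_lt.mpr ht.le)]

lemma tendsto_deltaMinus_atTop (x : ℝ) :
    Tendsto (deltaMinus x) atTop (nhds 1) := by
  refine Tendsto.congr' ?_ tendsto_const_nhds
  filter_upwards [eventually_ge_atTop x] with t ht
  rw [deltaMinus_apply, if_pos ht]

lemma tendsto_deltaPlus_atTop (x : ℝ) :
    Tendsto (deltaPlus x) atTop (nhds 1) := by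
  refine Tendsto.congr' ?_ tendsto_const_nhds
  filter_upwards [eventually_gt_atTop x] with t ht
  rw [deltaPlus_apply, if_pos ht]

/-- Dominated convergence for the jump sums. -/
lemma tendsto_jumpSum {u : ℝ → ℝ} (hu : Summable fun x => |u x|)
    {l : Filter ℝ} {g : ℝ → ℝ → ℝ} {c : ℝ → ℝ}
    (hlim : ∀ x, Tendsto (g x) l (nhds (c x)))
    (hbd : ∀ x t, |g x t| ≤ 1) :
    Tendsto (fun t => ∑' x, u x * g x t) l (nhds (∑' x, u x * c x)) := by
  refine tendsto_tsum_of_dominated_convergence hu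
    (fun x => Tendsto.const_mul (u x) (hlim x)) ?_
  filter_upwards with t k
  rw [Real.norm_eq_abs, abs_mul]
  exact mul_le_of_le_one_right (abs_nonneg _) (hbd k t)

lemma summable_jump {u : ℝ → ℝ} (hu : Summable fun x => |u x|)
    {g : ℝ → ℝ} (hbd : ∀ x, |g x| ≤ 1) :
    Summable fun x => u x * g x := by
  refine Summable.of_norm_bounded hu fun x => ?_
  rw [Real.norm_eq_abs, abs_mul]
  exact mul_le_of_le_one_right (abs_nonneg _) (hbd x)

lemma tsum_deltaMinus_eq (u : ℝ → ℝ) (hu : Summable fun x => |u x|) (a : ℝ) :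
    ∑' x, u x * deltaMinus x a = (∑' x, u x * deltaPlus x a) + u a := by
  have hs : Summable fun x => u x * deltaPlus x a :=
    summable_jump hu fun x => abs_deltaPlus_le x a
  have h2 : Summable fun x : ℝ => if x = a then u a else 0 :=
    (hasSum_ite_eq a (u a)).summable
  have key : ∀ x, u x * deltaMinus x a = u x * deltaPlus x a + if x = a then u a else 0 := by
    intro x
    rcases eq_or_ne x a with rfl | hx
    · simp [deltaMinus_apply, deltaPlus_apply]
    · rcases lt_or_ge x a with hlt | hle
      · simp [deltaMinus_apply, deltaPlus_apply, hlt, hlt.le, hx]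
      · have hgt : a < x := lt_of_le_of_ne hle (Ne.symm hx)
        simp [deltaMinus_apply, deltaPlus_apply, not_le.mpr hgt, not_lt.mpr hgt.le, hx]
  rw [tsum_congr key, hs.tsum_add h2, tsum_ite_eq]

/-- A function of bounded variation on `univ` has limits at `±∞`. -/
lemma bv_tendsto_atBot_atTop (f : ℝ → ℝ) (hf : BoundedVariationOn f Set.univ) :
    (∃ L : ℝ, Tendsto f atBot (nhds L)) ∧ ∃ L : ℝ, Tendsto f atTop (nhds L) := by
  have hl : LocallyBoundedVariationOn f Set.univ := hf.locallyBoundedVariationOn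
  set p : ℝ → ℝ := variationOnFromTo f Set.univ 0 with hp_def
  have hp : Monotone p :=
    monotoneOn_univ.mp (variationOnFromTo.monotoneOn hl (Set.mem_univ 0))
  have hq : Monotone (p - f) :=
    monotoneOn_univ.mp (variationOnFromTo.sub_self_monotoneOn hl (Set.mem_univ 0))
  set M : ℝ := (eVariationOn f Set.univ).toReal with hM_def
  have hpb : ∀ x, |p x| ≤ M := by
    intro x
    rcases le_total 0 x with hx | hx
    · rw [hp_def, variationOnFromTo.eq_of_le f _ hx, abs_of_nonneg ENNReal.toReal_nonneg]
      exact ENNReal.toReal_mono hf (eVariationOn.mono f (Set.inter_subset_left))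
    · rw [hp_def, variationOnFromTo.eq_of_ge f _ hx, abs_neg,
        abs_of_nonneg ENNReal.toReal_nonneg]
      exact ENNReal.toReal_mono hf (eVariationOn.mono f (Set.inter_subset_left))
  have hfb : ∀ x, |f x| ≤ |f 0| + M := by
    intro x
    have h1 : dist (f x) (f 0) ≤ M := by
      rw [dist_edist]
      exact ENNReal.toReal_mono hf
        (eVariationOn.edist_le f (Set.mem_univ x) (Set.mem_univ 0))
    calc |f x| = |f 0 + (f x - f 0)| := by ring_nf
      _ ≤ |f 0| + |f x - f 0| := abs_add_le _ _
      _ ≤ |f 0| + M := by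
          rw [← Real.dist_eq]; linarith
  have hpA : BddAbove (Set.range p) :=
    ⟨M, by rintro _ ⟨x, rfl⟩; exact (le_abs_self _).trans (hpb x)⟩
  have hpB : BddBelow (Set.range p) :=
    ⟨-M, by rintro _ ⟨x, rfl⟩; exact (abs_le.mp (hpb x)).1⟩
  have hqb : ∀ x, |(p - f) x| ≤ M + (|f 0| + M) := by
    intro x
    calc |(p - f) x| = |p x - f x| := rfl
      _ ≤ |p x| + |f x| := abs_sub _ _
      _ ≤ M + (|f 0| + M) := add_le_add (hpb x) (hfb x)
  have hqA : BddAbove (Set.range (p - f)) :=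
    ⟨M + (|f 0| + M), by rintro _ ⟨x, rfl⟩; exact (le_abs_self _).trans (hqb x)⟩
  have hqB : BddBelow (Set.range (p - f)) :=
    ⟨-(M + (|f 0| + M)), by rintro _ ⟨x, rfl⟩; exact (abs_le.mp (hqb x)).1⟩
  constructor
  · refine ⟨(⨅ x, p x) - ⨅ x, (p - f) x, ?_⟩
    have := (tendsto_atBot_ciInf hp hpB).sub (tendsto_atBot_ciInf hq hqB)
    exact this.congr fun x => by simp
  · refine ⟨(⨆ x, p x) - ⨆ x, (p - f) x, ?_⟩
    have := (tendsto_atTop_ciSup hp hpA).sub (tendsto_atTop_ciSup hq hqA)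
    exact this.congr fun x => by simp

/-- Proposition 1.2 (Proposition 2.8 of the paper):  a useful function has one-sided limits
everywhere, `F(a) = F₋(a) + u_a⁻` and `F(a) + u_a⁺ = F₊(a)`, and it has limits at `±∞`. -/
theorem useful_one_sided_limits (F f um up : ℝ → ℝ) (h : IsUseful F f um up) (a : ℝ) :
    (∃ L : ℝ, Tendsto F (nhdsWithin a (Set.Iio a)) (nhds L) ∧ F a = L + um a) ∧
    (∃ L : ℝ, Tendsto F (nhdsWithin a (Set.Ioi a)) (nhds L) ∧ F a + up a = L) ∧
    (∃ L : ℝ, Tendsto F atBot (nhds L)) ∧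
    (∃ L : ℝ, Tendsto F atTop (nhds L)) := by
  obtain ⟨⟨Lb, hLb⟩, ⟨Lt, hLt⟩⟩ := bv_tendsto_atBot_atTop f h.bddVar
  have hFeq : F = fun t => f t + (∑' x : ℝ, um x * deltaMinus x t)
      + (∑' x : ℝ, up x * deltaPlus x t) := funext h.decomp
  refine ⟨?_, ?_, ?_, ?_⟩
  · -- left limit
    have hm := tendsto_jumpSum h.summable_um (fun x => tendsto_deltaMinus_left x a)
      (fun x t => abs_deltaMinus_le x t)
    have hp' := tendsto_jumpSum h.summable_up (fun x => tendsto_deltaPlus_left x a)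
      (fun x t => abs_deltaPlus_le x t)
    have hfl : Tendsto f (nhdsWithin a (Set.Iio a)) (nhds (f a)) :=
      (h.cont.tendsto a).mono_left nhdsWithin_le_nhds
    refine ⟨f a + (∑' x : ℝ, um x * deltaPlus x a) + (∑' x : ℝ, up x * deltaPlus x a), ?_, ?_⟩
    · rw [hFeq]; exact (hfl.add hm).add hp'
    · rw [h.decomp a, tsum_deltaMinus_eq um h.summable_um a]; ring
  · -- right limit
    have hm := tendsto_jumpSum h.summable_um (fun x => tendsto_deltaMinus_right x a)
      (fun x t => abs_deltaMinus_le x t)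
    have hp' := tendsto_jumpSum h.summable_up (fun x => tendsto_deltaPlus_right x a)
      (fun x t => abs_deltaPlus_le x t)
    have hfl : Tendsto f (nhdsWithin a (Set.Ioi a)) (nhds (f a)) :=
      (h.cont.tendsto a).mono_left nhdsWithin_le_nhds
    refine ⟨f a + (∑' x : ℝ, um x * deltaMinus x a) + (∑' x : ℝ, up x * deltaMinus x a), ?_, ?_⟩
    · rw [hFeq]; exact (hfl.add hm).add hp'
    · rw [h.decomp a, tsum_deltaMinus_eq up h.summable_up a]; ring
  · -- atBot
    have hm := tendsto_jumpSum h.summable_um (fun x => tendsto_deltaMinus_atBot x)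
      (fun x t => abs_deltaMinus_le x t)
    have hp' := tendsto_jumpSum h.summable_up (fun x => tendsto_deltaPlus_atBot x)
      (fun x t => abs_deltaPlus_le x t)
    exact ⟨_, by rw [hFeq]; exact (hLb.add hm).add hp'⟩
  · -- atTop
    have hm := tendsto_jumpSum h.summable_um (fun x => tendsto_deltaMinus_atTop x)
      (fun x t => abs_deltaMinus_le x t)
    have hp' := tendsto_jumpSum h.summable_up (fun x => tendsto_deltaPlus_atTop x)
      (fun x t => abs_deltaPlus_le x t)
    exact ⟨_, by rw [hFeq]; exact (hLt.add hm).add hp'⟩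

end
end

section
/- Let F be a useful function. (1) For all a ≤ b and c ≤ d in ℝ, the set G(F) ∩ ([a,b]×[c,d]) is closed in ℝ². (2) For any a ≤ b in ℝ, F has a local maximum on [a,b] in the sense that there exists x ∈ [a,b] with max F(y) ≤ max F(x) for all y ∈ [a,b]. (3) For any a ≤ b in ℝ, F has a local minimum on [a,b] in the sense that there exists x ∈ [a,b] with min F(x) ≤ min F(y) for all y ∈ [a,b]. -/
/-!
Useful functions, their graphs, and local extrema (Lemma 2.12 of the paper).
-/

noncomputable section

open Filter Topology

/-- `min F (a) = min {F(a), F₋(a), F₊(a)}`. -/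
def minF (F : ℝ → ℝ) (a : ℝ) : ℝ :=
  min (F a) (min (Function.leftLim F a) (Function.rightLim F a))

/-- `max F (a) = max {F(a), F₋(a), F₊(a)}`. -/
def maxF (F : ℝ → ℝ) (a : ℝ) : ℝ :=
  max (F a) (max (Function.leftLim F a) (Function.rightLim F a))

/-- The graph `𝒢(F) = {(x,y) | min F (x) ≤ y ≤ max F (x)}` of a useful function. -/
def graphOf (F : ℝ → ℝ) : Set (ℝ × ℝ) :=
  {p : ℝ × ℝ | minF F p.1 ≤ p.2 ∧ p.2 ≤ maxF F p.1}

open Function Set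

namespace UsefulAux

variable {g h F : ℝ → ℝ}

/-! ### Limits of `leftLim` and `rightLim` of a monotone function -/

lemma tendsto_leftLim_left (hg : Monotone g) (x : ℝ) :
    Tendsto (leftLim g) (𝓝[<] x) (𝓝 (leftLim g x)) := by
  rw [tendsto_order]
  constructor
  · intro l hl
    obtain ⟨z, hz, hzx⟩ :=
      (((hg.tendsto_leftLim x).eventually_const_lt hl).and self_mem_nhdsWithin).exists
    filter_upwards [Ioo_mem_nhdsLT hzx] with y hy
    exact hz.trans_le (hg.le_leftLim hy.1)
  · intro u hu
    filter_upwards [self_mem_nhdsWithin] with y (hy : y < x)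
    exact (((hg.leftLim_le le_rfl).trans (hg.le_leftLim hy)).trans_lt hu)

lemma tendsto_rightLim_left (hg : Monotone g) (x : ℝ) :
    Tendsto (rightLim g) (𝓝[<] x) (𝓝 (leftLim g x)) := by
  rw [tendsto_order]
  constructor
  · intro l hl
    filter_upwards [(hg.tendsto_leftLim x).eventually_const_lt hl] with y hy
    exact hy.trans_le (hg.le_rightLim le_rfl)
  · intro u hu
    filter_upwards [self_mem_nhdsWithin] with y (hy : y < x)
    exact (hg.rightLim_le_leftLim hy).trans_lt hu

lemma tendsto_leftLim_right (hg : Monotone g) (x : ℝ) :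
    Tendsto (leftLim g) (𝓝[>] x) (𝓝 (rightLim g x)) := by
  rw [tendsto_order]
  constructor
  · intro l hl
    filter_upwards [self_mem_nhdsWithin] with y (hy : x < y)
    exact hl.trans_le (hg.rightLim_le_leftLim hy)
  · intro u hu
    filter_upwards [(hg.tendsto_rightLim x).eventually_lt_const hu] with y hy
    exact ((hg.leftLim_le le_rfl).trans_lt hy)

lemma tendsto_rightLim_right (hg : Monotone g) (x : ℝ) :
    Tendsto (rightLim g) (𝓝[>] x) (𝓝 (rightLim g x)) := by
  rw [tendsto_order]
  constructor
  · intro l hl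
    filter_upwards [self_mem_nhdsWithin] with y (hy : x < y)
    exact hl.trans_le ((hg.rightLim_le hy).trans (hg.le_rightLim le_rfl))
  · intro u hu
    obtain ⟨w, hw, hxw⟩ :=
      (((hg.tendsto_rightLim x).eventually_lt_const hu).and self_mem_nhdsWithin).exists
    filter_upwards [Ioo_mem_nhdsGT hxw] with y hy
    exact (hg.rightLim_le hy.2).trans_lt hw

/-! ### Decomposition of one-sided limits for `F = g - h` -/

lemma leftLim_le_maxF (F : ℝ → ℝ) (x : ℝ) : leftLim F x ≤ maxF F x :=
  (le_max_left _ _).trans (le_max_right _ _)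

lemma rightLim_le_maxF (F : ℝ → ℝ) (x : ℝ) : rightLim F x ≤ maxF F x :=
  (le_max_right _ _).trans (le_max_right _ _)

lemma minF_le_leftLim (F : ℝ → ℝ) (x : ℝ) : minF F x ≤ leftLim F x :=
  (min_le_right _ _).trans (min_le_left _ _)

lemma minF_le_rightLim (F : ℝ → ℝ) (x : ℝ) : minF F x ≤ rightLim F x :=
  (min_le_right _ _).trans (min_le_right _ _)

section Decomp

variable (hg : Monotone g) (hh : Monotone h) (hF : ∀ t, F t = g t - h t)
include hg hh hF

lemma leftLim_decomp (y : ℝ) : leftLim F y = leftLim g y - leftLim h y :=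
  leftLim_eq_of_tendsto
    (Tendsto.congr (fun t => (hF t).symm)
      ((hg.tendsto_leftLim y).sub (hh.tendsto_leftLim y)))

lemma rightLim_decomp (y : ℝ) : rightLim F y = rightLim g y - rightLim h y :=
  rightLim_eq_of_tendsto
    (Tendsto.congr (fun t => (hF t).symm)
      ((hg.tendsto_rightLim y).sub (hh.tendsto_rightLim y)))

lemma maxF_le_bound (y : ℝ) : maxF F y ≤ rightLim g y - leftLim h y := by
  rw [maxF, leftLim_decomp hg hh hF y, rightLim_decomp hg hh hF y, hF y]
  refine max_le ?_ (max_le ?_ ?_)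
  · exact sub_le_sub (hg.le_rightLim le_rfl) (hh.leftLim_le le_rfl)
  · exact sub_le_sub_right (hg.leftLim_le_rightLim le_rfl) _
  · exact sub_le_sub_left (hh.leftLim_le_rightLim le_rfl) _

lemma bound_le_minF (y : ℝ) : leftLim g y - rightLim h y ≤ minF F y := by
  rw [minF, leftLim_decomp hg hh hF y, rightLim_decomp hg hh hF y, hF y]
  refine le_min ?_ (le_min ?_ ?_)
  · exact sub_le_sub (hg.leftLim_le le_rfl) (hh.le_rightLim le_rfl)
  · exact sub_le_sub_left (hh.leftLim_le_rightLim le_rfl) _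
  · exact sub_le_sub_right (hg.leftLim_le_rightLim le_rfl) _

lemma tendsto_maxF_left (x : ℝ) :
    Tendsto (maxF F) (𝓝[<] x) (𝓝 (leftLim F x)) := by
  rw [leftLim_decomp hg hh hF x]
  refine tendsto_of_tendsto_of_tendsto_of_le_of_le
    (Tendsto.congr (fun t => (hF t).symm)
      ((hg.tendsto_leftLim x).sub (hh.tendsto_leftLim x)))
    ((tendsto_rightLim_left hg x).sub (tendsto_leftLim_left hh x))
    (fun y => le_max_left _ _) (fun y => maxF_le_bound hg hh hF y)

lemma tendsto_minF_left (x : ℝ) :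
    Tendsto (minF F) (𝓝[<] x) (𝓝 (leftLim F x)) := by
  rw [leftLim_decomp hg hh hF x]
  refine tendsto_of_tendsto_of_tendsto_of_le_of_le
    ((tendsto_leftLim_left hg x).sub (tendsto_rightLim_left hh x))
    (Tendsto.congr (fun t => (hF t).symm)
      ((hg.tendsto_leftLim x).sub (hh.tendsto_leftLim x)))
    (fun y => bound_le_minF hg hh hF y) (fun y => min_le_left _ _)

lemma tendsto_maxF_right (x : ℝ) :
    Tendsto (maxF F) (𝓝[>] x) (𝓝 (rightLim F x)) := by
  rw [rightLim_decomp hg hh hF x]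
  refine tendsto_of_tendsto_of_tendsto_of_le_of_le
    (Tendsto.congr (fun t => (hF t).symm)
      ((hg.tendsto_rightLim x).sub (hh.tendsto_rightLim x)))
    ((tendsto_rightLim_right hg x).sub (tendsto_leftLim_right hh x))
    (fun y => le_max_left _ _) (fun y => maxF_le_bound hg hh hF y)

lemma tendsto_minF_right (x : ℝ) :
    Tendsto (minF F) (𝓝[>] x) (𝓝 (rightLim F x)) := by
  rw [rightLim_decomp hg hh hF x]
  refine tendsto_of_tendsto_of_tendsto_of_le_of_le
    ((tendsto_leftLim_right hg x).sub (tendsto_rightLim_right hh x))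
    (Tendsto.congr (fun t => (hF t).symm)
      ((hg.tendsto_rightLim x).sub (hh.tendsto_rightLim x)))
    (fun y => bound_le_minF hg hh hF y) (fun y => min_le_left _ _)

lemma usc_maxF (x u : ℝ) (hu : maxF F x < u) : ∀ᶠ y in 𝓝 x, maxF F y < u := by
  rw [← nhdsNE_sup_pure, eventually_sup,
    ← nhdsLT_sup_nhdsGT, eventually_sup]
  refine ⟨⟨?_, ?_⟩, ?_⟩
  · exact (tendsto_maxF_left hg hh hF x).eventually_lt_const
      ((leftLim_le_maxF F x).trans_lt hu)
  · exact (tendsto_maxF_right hg hh hF x).eventually_lt_const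
      ((rightLim_le_maxF F x).trans_lt hu)
  · exact eventually_pure.mpr hu

lemma lsc_minF (x u : ℝ) (hu : u < minF F x) : ∀ᶠ y in 𝓝 x, u < minF F y := by
  rw [← nhdsNE_sup_pure, eventually_sup,
    ← nhdsLT_sup_nhdsGT, eventually_sup]
  refine ⟨⟨?_, ?_⟩, ?_⟩
  · exact (tendsto_minF_left hg hh hF x).eventually_const_lt
      (hu.trans_le (minF_le_leftLim F x))
  · exact (tendsto_minF_right hg hh hF x).eventually_const_lt
      (hu.trans_le (minF_le_rightLim F x))
  · exact eventually_pure.mpr hu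

/-! ### The three parts of the lemma -/

lemma graph_closed (a b c d : ℝ) :
    IsClosed (graphOf F ∩ (Set.Icc a b ×ˢ Set.Icc c d)) := by
  apply IsSeqClosed.isClosed
  intro p l hp hl
  have hl1 : Tendsto (fun n => (p n).1) atTop (𝓝 l.1) := (continuous_fst.tendsto l).comp hl
  have hl2 : Tendsto (fun n => (p n).2) atTop (𝓝 l.2) := (continuous_snd.tendsto l).comp hl
  have hbox : l ∈ Set.Icc a b ×ˢ Set.Icc c d := by
    constructor
    · exact isClosed_Icc.mem_of_tendsto hl1 (Eventually.of_forall fun n => (hp n).2.1)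
    · exact isClosed_Icc.mem_of_tendsto hl2 (Eventually.of_forall fun n => (hp n).2.2)
  refine ⟨?_, hbox⟩
  set x := l.1 with hxdef
  by_cases h1 : ∃ᶠ n in atTop, (p n).1 = x
  · obtain ⟨φ, hφ, hx⟩ := extraction_of_frequently_atTop h1
    have hy : Tendsto (fun n => (p (φ n)).2) atTop (𝓝 l.2) := hl2.comp hφ.tendsto_atTop
    constructor
    · refine ge_of_tendsto hy (Eventually.of_forall fun n => ?_)
      have := (hp (φ n)).1.1; rwa [hx n] at this
    · refine le_of_tendsto hy (Eventually.of_forall fun n => ?_)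
      have := (hp (φ n)).1.2; rwa [hx n] at this
  · by_cases h2 : ∃ᶠ n in atTop, (p n).1 < x
    · obtain ⟨φ, hφ, hx⟩ := extraction_of_frequently_atTop h2
      have hxt : Tendsto (fun n => (p (φ n)).1) atTop (𝓝[<] x) :=
        tendsto_nhdsWithin_of_tendsto_nhds_of_eventually_within _
          (hl1.comp hφ.tendsto_atTop) (Eventually.of_forall hx)
      have hy : Tendsto (fun n => (p (φ n)).2) atTop (𝓝 l.2) := hl2.comp hφ.tendsto_atTop
      have hkey : l.2 = leftLim F x := by
        refine le_antisymm ?_ ?_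
        · exact le_of_tendsto_of_tendsto' hy ((tendsto_maxF_left hg hh hF x).comp hxt)
            (fun n => (hp (φ n)).1.2)
        · exact le_of_tendsto_of_tendsto' ((tendsto_minF_left hg hh hF x).comp hxt) hy
            (fun n => (hp (φ n)).1.1)
      constructor
      · show minF F l.1 ≤ l.2
        rw [hkey]; exact minF_le_leftLim F x
      · show l.2 ≤ maxF F l.1
        rw [hkey]; exact leftLim_le_maxF F x
    · have h3 : ∃ᶠ n in atTop, x < (p n).1 := by
        rw [not_frequently] at h1 h2
        refine ((h1.and h2).mono fun n hn => ?_).frequently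
        exact lt_of_le_of_ne (not_lt.mp hn.2) (fun e => hn.1 e.symm)
      obtain ⟨φ, hφ, hx⟩ := extraction_of_frequently_atTop h3
      have hxt : Tendsto (fun n => (p (φ n)).1) atTop (𝓝[>] x) :=
        tendsto_nhdsWithin_of_tendsto_nhds_of_eventually_within _
          (hl1.comp hφ.tendsto_atTop) (Eventually.of_forall hx)
      have hy : Tendsto (fun n => (p (φ n)).2) atTop (𝓝 l.2) := hl2.comp hφ.tendsto_atTop
      have hkey : l.2 = rightLim F x := by
        refine le_antisymm ?_ ?_
        · exact le_of_tendsto_of_tendsto' hy ((tendsto_maxF_right hg hh hF x).comp hxt)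
            (fun n => (hp (φ n)).1.2)
        · exact le_of_tendsto_of_tendsto' ((tendsto_minF_right hg hh hF x).comp hxt) hy
            (fun n => (hp (φ n)).1.1)
      constructor
      · show minF F l.1 ≤ l.2
        rw [hkey]; exact minF_le_rightLim F x
      · show l.2 ≤ maxF F l.1
        rw [hkey]; exact rightLim_le_maxF F x

lemma exists_max (a b : ℝ) (hab : a ≤ b) :
    ∃ x ∈ Set.Icc a b, ∀ y ∈ Set.Icc a b, maxF F y ≤ maxF F x := by
  set S := sSup (maxF F '' Set.Icc a b) with hS
  have hne : (maxF F '' Set.Icc a b).Nonempty := ⟨_, ⟨a, ⟨le_rfl, hab⟩, rfl⟩⟩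
  have hbdd : BddAbove (maxF F '' Set.Icc a b) := by
    refine ⟨rightLim g b - leftLim h a, ?_⟩
    rintro _ ⟨y, hy, rfl⟩
    exact (maxF_le_bound hg hh hF y).trans
      (sub_le_sub (hg.rightLim hy.2) (hh.leftLim hy.1))
  have hseq : ∀ n : ℕ, ∃ x ∈ Set.Icc a b, S - 1 / ((n : ℝ) + 1) < maxF F x := by
    intro n
    have hlt : S - 1 / ((n : ℝ) + 1) < S := by
      have : (0 : ℝ) < 1 / ((n : ℝ) + 1) := by positivity
      linarith
    obtain ⟨_, ⟨x, hx, rfl⟩, hlt'⟩ := exists_lt_of_lt_csSup hne hlt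
    exact ⟨x, hx, hlt'⟩
  choose xs hxs hlts using hseq
  obtain ⟨x, hx, φ, hφ, hconv⟩ := isCompact_Icc.tendsto_subseq hxs
  refine ⟨x, hx, fun y hy => ?_⟩
  have hyS : maxF F y ≤ S := le_csSup hbdd ⟨y, hy, rfl⟩
  refine hyS.trans ?_
  by_contra hc
  push_neg at hc
  have hu := usc_maxF hg hh hF x ((maxF F x + S) / 2) (by linarith)
  have h1 : ∀ᶠ n in atTop, maxF F (xs (φ n)) < (maxF F x + S) / 2 := hconv.eventually hu
  have h2 : Tendsto (fun n : ℕ => S - 1 / ((φ n : ℝ) + 1)) atTop (𝓝 (S - 0)) :=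
    tendsto_const_nhds.sub (tendsto_one_div_add_atTop_nhds_zero_nat.comp hφ.tendsto_atTop)
  have h3 : S - 0 ≤ (maxF F x + S) / 2 := by
    refine le_of_tendsto h2 (h1.mono fun n hn => ?_)
    exact ((hlts (φ n)).trans hn).le
  linarith

lemma exists_min (a b : ℝ) (hab : a ≤ b) :
    ∃ x ∈ Set.Icc a b, ∀ y ∈ Set.Icc a b, minF F x ≤ minF F y := by
  set S := sInf (minF F '' Set.Icc a b) with hS
  have hne : (minF F '' Set.Icc a b).Nonempty := ⟨_, ⟨a, ⟨le_rfl, hab⟩, rfl⟩⟩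
  have hbdd : BddBelow (minF F '' Set.Icc a b) := by
    refine ⟨leftLim g a - rightLim h b, ?_⟩
    rintro _ ⟨y, hy, rfl⟩
    exact (sub_le_sub (hg.leftLim hy.1) (hh.rightLim hy.2)).trans (bound_le_minF hg hh hF y)
  have hseq : ∀ n : ℕ, ∃ x ∈ Set.Icc a b, minF F x < S + 1 / ((n : ℝ) + 1) := by
    intro n
    have hlt : S < S + 1 / ((n : ℝ) + 1) := by
      have : (0 : ℝ) < 1 / ((n : ℝ) + 1) := by positivity
      linarith
    obtain ⟨_, ⟨x, hx, rfl⟩, hlt'⟩ := exists_lt_of_csInf_lt hne hlt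
    exact ⟨x, hx, hlt'⟩
  choose xs hxs hlts using hseq
  obtain ⟨x, hx, φ, hφ, hconv⟩ := isCompact_Icc.tendsto_subseq hxs
  refine ⟨x, hx, fun y hy => ?_⟩
  have hyS : S ≤ minF F y := csInf_le hbdd ⟨y, hy, rfl⟩
  refine le_trans ?_ hyS
  by_contra hc
  push_neg at hc
  have hu := lsc_minF hg hh hF x ((minF F x + S) / 2) (by linarith)
  have h1 : ∀ᶠ n in atTop, (minF F x + S) / 2 < minF F (xs (φ n)) := hconv.eventually hu
  have h2 : Tendsto (fun n : ℕ => S + 1 / ((φ n : ℝ) + 1)) atTop (𝓝 (S + 0)) :=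
    tendsto_const_nhds.add (tendsto_one_div_add_atTop_nhds_zero_nat.comp hφ.tendsto_atTop)
  have h3 : (minF F x + S) / 2 ≤ S + 0 := by
    refine ge_of_tendsto h2 (h1.mono fun n hn => ?_)
    exact (hn.trans (hlts (φ n))).le
  linarith

end Decomp

/-! ### Jump sums -/

lemma max_sub_max_neg (a : ℝ) : max a 0 - max (-a) 0 = a := by
  rcases le_total a 0 with hc | hc
  · rw [max_eq_right hc, max_eq_left (neg_nonneg.mpr hc)]; ring
  · rw [max_eq_left hc, max_eq_right (neg_nonpos.mpr hc)]; ring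

section Jump

variable {v : ℝ → ℝ} {D : ℝ → ℝ → ℝ}

lemma jump_summable (hv : Summable fun x => |v x|)
    (hD0 : ∀ x t, 0 ≤ D x t) (hD1 : ∀ x t, D x t ≤ 1)
    (w : ℝ → ℝ) (hw0 : ∀ x, 0 ≤ w x) (hwv : ∀ x, w x ≤ |v x|) (t : ℝ) :
    Summable fun x => w x * D x t := by
  refine hv.of_nonneg_of_le (fun x => mul_nonneg (hw0 x) (hD0 x t)) (fun x => ?_)
  calc w x * D x t ≤ |v x| * 1 :=
        mul_le_mul (hwv x) (hD1 x t) (hD0 x t) (abs_nonneg _)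
    _ = |v x| := mul_one _

lemma jump_monotone (hv : Summable fun x => |v x|)
    (hD0 : ∀ x t, 0 ≤ D x t) (hD1 : ∀ x t, D x t ≤ 1) (hDm : ∀ x, Monotone (D x))
    (w : ℝ → ℝ) (hw0 : ∀ x, 0 ≤ w x) (hwv : ∀ x, w x ≤ |v x|) :
    Monotone (fun t => ∑' x, w x * D x t) := by
  intro s t hst
  exact Summable.tsum_le_tsum (fun x => mul_le_mul_of_nonneg_left (hDm x hst) (hw0 x))
    (jump_summable hv hD0 hD1 w hw0 hwv s) (jump_summable hv hD0 hD1 w hw0 hwv t)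

lemma jump_decomp (hv : Summable fun x => |v x|)
    (hD0 : ∀ x t, 0 ≤ D x t) (hD1 : ∀ x t, D x t ≤ 1) (t : ℝ) :
    ∑' x, v x * D x t =
      (∑' x, max (v x) 0 * D x t) - ∑' x, max (-v x) 0 * D x t := by
  rw [← Summable.tsum_sub
    (jump_summable hv hD0 hD1 _ (fun x => le_max_right _ _)
      (fun x => max_le (le_abs_self _) (abs_nonneg _)) t)
    (jump_summable hv hD0 hD1 _ (fun x => le_max_right _ _)
      (fun x => max_le (abs_neg (v x) ▸ le_abs_self _) (abs_nonneg _)) t)]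
  refine tsum_congr fun x => ?_
  rw [← sub_mul, max_sub_max_neg]

end Jump

lemma deltaMinus_nonneg (x t : ℝ) : 0 ≤ deltaMinus x t := by
  unfold deltaMinus
  by_cases hx : t ∈ Set.Ici x <;> simp [hx]

lemma deltaMinus_le_one (x t : ℝ) : deltaMinus x t ≤ 1 := by
  unfold deltaMinus
  by_cases hx : t ∈ Set.Ici x <;> simp [hx]

lemma deltaMinus_monotone (x : ℝ) : Monotone (deltaMinus x) := by
  intro s t hst
  unfold deltaMinus
  by_cases hs : s ∈ Set.Ici x
  · have ht : t ∈ Set.Ici x := le_trans hs hst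
    simp [hs, ht]
  · simp only [Set.indicator_of_notMem hs]
    by_cases ht : t ∈ Set.Ici x <;> simp [ht]

lemma deltaPlus_nonneg (x t : ℝ) : 0 ≤ deltaPlus x t := by
  unfold deltaPlus
  by_cases hx : t ∈ Set.Ioi x <;> simp [hx]

lemma deltaPlus_le_one (x t : ℝ) : deltaPlus x t ≤ 1 := by
  unfold deltaPlus
  by_cases hx : t ∈ Set.Ioi x <;> simp [hx]

lemma deltaPlus_monotone (x : ℝ) : Monotone (deltaPlus x) := by
  intro s t hst
  unfold deltaPlus
  by_cases hs : s ∈ Set.Ioi x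
  · have ht : t ∈ Set.Ioi x := lt_of_lt_of_le hs hst
    simp [hs, ht]
  · simp only [Set.indicator_of_notMem hs]
    by_cases ht : t ∈ Set.Ioi x <;> simp [ht]

end UsefulAux

open UsefulAux

/-- Lemma 2.12:  for a useful function `F`, (1) the part of the graph of `F` in any closed box
is closed; (2) `F` attains a local maximum on any `[a,b]`, in the sense that there is `x ∈ [a,b]`
with `max F (y) ≤ max F (x)` for all `y ∈ [a,b]`; (3) dually, `F` attains a local minimum. -/
theorem useful_graph_closed_and_extrema (F f um up : ℝ → ℝ) (h : IsUseful F f um up) :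
    (∀ a b c d : ℝ, a ≤ b → c ≤ d →
        IsClosed (graphOf F ∩ (Set.Icc a b ×ˢ Set.Icc c d))) ∧
    (∀ a b : ℝ, a ≤ b → ∃ x ∈ Set.Icc a b, ∀ y ∈ Set.Icc a b, maxF F y ≤ maxF F x) ∧
    (∀ a b : ℝ, a ≤ b → ∃ x ∈ Set.Icc a b, ∀ y ∈ Set.Icc a b, minF F x ≤ minF F y) := by
  obtain ⟨p, q, hpm, hqm, hpq⟩ :=
    h.bddVar.locallyBoundedVariationOn.exists_monotoneOn_sub_monotoneOn
  have hp : Monotone p := monotoneOn_univ.mp hpm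
  have hq : Monotone q := monotoneOn_univ.mp hqm
  set g : ℝ → ℝ := fun t => p t + (∑' x, max (um x) 0 * deltaMinus x t)
      + (∑' x, max (up x) 0 * deltaPlus x t) with hgdef
  set h' : ℝ → ℝ := fun t => q t + (∑' x, max (-um x) 0 * deltaMinus x t)
      + (∑' x, max (-up x) 0 * deltaPlus x t) with hhdef
  have hg : Monotone g := by
    apply Monotone.add
    apply Monotone.add hp
    · exact jump_monotone h.summable_um deltaMinus_nonneg deltaMinus_le_one
        deltaMinus_monotone _ (fun x => le_max_right _ _)
        (fun x => max_le (le_abs_self _) (abs_nonneg _))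
    · exact jump_monotone h.summable_up deltaPlus_nonneg deltaPlus_le_one
        deltaPlus_monotone _ (fun x => le_max_right _ _)
        (fun x => max_le (le_abs_self _) (abs_nonneg _))
  have hh : Monotone h' := by
    apply Monotone.add
    apply Monotone.add hq
    · exact jump_monotone h.summable_um deltaMinus_nonneg deltaMinus_le_one
        deltaMinus_monotone _ (fun x => le_max_right _ _)
        (fun x => max_le (abs_neg (um x) ▸ le_abs_self _) (abs_nonneg _))
    · exact jump_monotone h.summable_up deltaPlus_nonneg deltaPlus_le_one
        deltaPlus_monotone _ (fun x => le_max_right _ _)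
        (fun x => max_le (abs_neg (up x) ▸ le_abs_self _) (abs_nonneg _))
  have hF : ∀ t, F t = g t - h' t := by
    intro t
    have hf : f t = p t - q t := by rw [hpq]; rfl
    rw [h.decomp t, hf,
      jump_decomp h.summable_um deltaMinus_nonneg deltaMinus_le_one t,
      jump_decomp h.summable_up deltaPlus_nonneg deltaPlus_le_one t,
      hgdef, hhdef]
    ring
  exact ⟨fun a b c d _ _ => graph_closed hg hh hF a b c d,
    fun a b hab => exists_max hg hh hF a b hab,
    fun a b hab => exists_min hg hh hF a b hab⟩

end
end

section
/- Let F be a useful function with coefficients (u_x⁻), (u_x⁺), and let a ∈ ℝ. Then the local variation of F at a equals |u_a⁻| + |u_a⁺|; equivalently, var_F(a) = |F(a) − F₋(a)| + |F₊(a) − F(a)|. -/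
/-!
Proposition 3.12 of the paper:  the local variation of a useful function `F` at a point `a`
equals `|u_a⁻| + |u_a⁺|`, where the local variation is
`var_F(a) = lim_{δ → 0⁺} var_F((a - δ, a + δ))`.
-/

noncomputable section

open Filter Topology

namespace UsefulAux

lemma deltaMinus_mem (x t : ℝ) : deltaMinus x t = 0 ∨ deltaMinus x t = 1 := by
  unfold deltaMinus
  by_cases h : t ∈ Set.Ici x <;> simp [Set.indicator_apply, h]

lemma deltaPlus_mem (x t : ℝ) : deltaPlus x t = 0 ∨ deltaPlus x t = 1 := by
  unfold deltaPlus
  by_cases h : t ∈ Set.Ioi x <;> simp [Set.indicator_apply, h]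

lemma deltaMinus_sub {s t : ℝ} (hst : s ≤ t) (x : ℝ) :
    deltaMinus x t - deltaMinus x s = (Set.Ioc s t).indicator 1 x := by
  unfold deltaMinus
  by_cases hxs : x ≤ s
  · simp [Set.indicator_apply, Set.mem_Ici, Set.mem_Ioc, hxs, le_trans hxs hst, not_lt.2 hxs]
  · by_cases hxt : x ≤ t <;>
      simp [Set.indicator_apply, Set.mem_Ici, Set.mem_Ioc, hxs, hxt, lt_of_not_ge hxs]

lemma deltaPlus_sub {s t : ℝ} (hst : s ≤ t) (x : ℝ) :
    deltaPlus x t - deltaPlus x s = (Set.Ico s t).indicator 1 x := by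
  unfold deltaPlus
  by_cases hxs : x < s
  · simp [Set.indicator_apply, Set.mem_Ioi, Set.mem_Ico, hxs, lt_of_lt_of_le hxs hst,
      not_le.2 hxs]
  · by_cases hxt : x < t <;>
      simp [Set.indicator_apply, Set.mem_Ioi, Set.mem_Ico, hxs, hxt, le_of_not_gt hxs]

lemma summable_mul_aux {c d : ℝ → ℝ} (hc : Summable fun x => |c x|)
    (hd : ∀ x, d x = 0 ∨ d x = 1) : Summable fun x => c x * d x := by
  apply Summable.of_abs
  refine Summable.of_nonneg_of_le (fun x => abs_nonneg _) (fun x => ?_) hc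
  rcases hd x with h | h <;> simp [abs_mul, h]

lemma indicator_mem (S : Set ℝ) (x : ℝ) :
    S.indicator (1 : ℝ → ℝ) x = 0 ∨ S.indicator (1 : ℝ → ℝ) x = 1 := by
  by_cases h : x ∈ S <;> simp [Set.indicator_apply, h]

/-- `∑' x, c x * 1_S x` minus singleton split at `a ∈ S`. -/
lemma tsum_split_pt {c : ℝ → ℝ} (hc : Summable fun x => |c x|) {S : Set ℝ} {a : ℝ}
    (ha : a ∈ S) :
    ∑' x, c x * S.indicator 1 x = c a + ∑' x, c x * (S \ {a}).indicator 1 x := by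
  have h1 : Summable fun x => c x * ({a} : Set ℝ).indicator 1 x :=
    summable_mul_aux hc (indicator_mem _)
  have h2 : Summable fun x => c x * (S \ {a}).indicator 1 x :=
    summable_mul_aux hc (indicator_mem _)
  have key : ∀ x, c x * S.indicator 1 x
      = c x * ({a} : Set ℝ).indicator 1 x + c x * (S \ {a}).indicator 1 x := by
    intro x
    by_cases hx : x = a
    · subst hx
      simp [Set.indicator_apply, ha]
    · have : x ∈ S \ {a} ↔ x ∈ S := by simp [hx]
      by_cases hxs : x ∈ S <;> simp [Set.indicator_apply, hx, hxs]
  calc ∑' x, c x * S.indicator 1 x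
      = ∑' x, (c x * ({a} : Set ℝ).indicator 1 x + c x * (S \ {a}).indicator 1 x) :=
        tsum_congr key
    _ = (∑' x, c x * ({a} : Set ℝ).indicator 1 x) + ∑' x, c x * (S \ {a}).indicator 1 x :=
        h1.tsum_add h2
    _ = c a + ∑' x, c x * (S \ {a}).indicator 1 x := by
        congr 1
        rw [tsum_eq_single a]
        · simp [Set.indicator_apply]
        · intro b hb; simp [Set.indicator_apply, hb]

lemma abs_tsum_mul_indicator_le {c : ℝ → ℝ} (hc : Summable fun x => |c x|)
    {S U : Set ℝ} (hSU : S ⊆ U) :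
    |∑' x, c x * S.indicator 1 x| ≤ ∑' x, U.indicator (fun x => |c x|) x := by
  have hs : Summable fun x => c x * S.indicator 1 x := summable_mul_aux hc (indicator_mem _)
  have hs' : Summable fun x => |c x * S.indicator 1 x| := by
    refine Summable.of_nonneg_of_le (fun x => abs_nonneg _) (fun x => ?_) hc
    rcases indicator_mem S x with h | h <;> simp [abs_mul, h]
  have hnorm : Summable fun x => ‖c x * S.indicator 1 x‖ := by
    simpa only [Real.norm_eq_abs] using hs'
  have h0 := norm_tsum_le_tsum_norm hnorm
  simp only [Real.norm_eq_abs] at h0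
  calc |∑' x, c x * S.indicator 1 x| ≤ ∑' x, |c x * S.indicator 1 x| := h0
    _ ≤ ∑' x, U.indicator (fun x => |c x|) x := by
        refine Summable.tsum_le_tsum (fun x => ?_) hs' (hc.indicator U)
        by_cases hx : x ∈ S
        · simp [abs_mul, Set.indicator_apply, hx, hSU hx]
        · rw [Set.indicator_of_notMem hx, mul_zero, abs_zero]
          exact Set.indicator_apply_nonneg fun _ => abs_nonneg _

lemma tsum_indicator_mono {c g : ℝ → ℝ} (hc : Summable fun x => |c x|)
    (hg : Summable g) {U W : Set ℝ} (hUW : U ⊆ W) (hcg : ∀ x, |c x| ≤ g x) :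
    ∑' x, U.indicator (fun x => |c x|) x ≤ ∑' x, W.indicator g x := by
  refine Summable.tsum_le_tsum (fun x => ?_) (hc.indicator U) (hg.indicator W)
  by_cases hx : x ∈ U
  · rw [Set.indicator_of_mem hx, Set.indicator_of_mem (hUW hx)]
    exact hcg x
  · rw [Set.indicator_of_notMem hx]
    exact Set.indicator_apply_nonneg fun _ => le_trans (abs_nonneg (c x)) (hcg x)

/-- Increment formula for the jump part. -/
lemma jump_inc {um up : ℝ → ℝ} (hum : Summable fun x => |um x|)
    (hup : Summable fun x => |up x|) {s t : ℝ} (hst : s ≤ t) :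
    ((∑' x, um x * deltaMinus x t) + (∑' x, up x * deltaPlus x t))
      - ((∑' x, um x * deltaMinus x s) + (∑' x, up x * deltaPlus x s))
    = (∑' x, um x * (Set.Ioc s t).indicator 1 x)
      + (∑' x, up x * (Set.Ico s t).indicator 1 x) := by
  have h1 : Summable fun x => um x * deltaMinus x t := summable_mul_aux hum (fun x => deltaMinus_mem x t)
  have h2 : Summable fun x => um x * deltaMinus x s := summable_mul_aux hum (fun x => deltaMinus_mem x s)
  have h3 : Summable fun x => up x * deltaPlus x t := summable_mul_aux hup (fun x => deltaPlus_mem x t)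
  have h4 : Summable fun x => up x * deltaPlus x s := summable_mul_aux hup (fun x => deltaPlus_mem x s)
  have e1 : (∑' x, um x * deltaMinus x t) - (∑' x, um x * deltaMinus x s)
      = ∑' x, um x * (Set.Ioc s t).indicator 1 x := by
    rw [← Summable.tsum_sub h1 h2]
    refine tsum_congr fun x => ?_
    rw [← mul_sub, deltaMinus_sub hst]
  have e2 : (∑' x, up x * deltaPlus x t) - (∑' x, up x * deltaPlus x s)
      = ∑' x, up x * (Set.Ico s t).indicator 1 x := by
    rw [← Summable.tsum_sub h3 h4]
    refine tsum_congr fun x => ?_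
    rw [← mul_sub, deltaPlus_sub hst]
  rw [← e1, ← e2]; ring

/-- Pointwise: a finite sum of indicators of pairwise "disjoint" subsets of `U` is at most
the indicator of `U`. -/
lemma sum_indicator_le {n : ℕ} {S : ℕ → Set ℝ} {U : Set ℝ}
    (hd : ∀ i j, i ≠ j → ∀ x, x ∈ S i → x ∉ S j)
    (hsub : ∀ i, i < n → S i ⊆ U) (h : ℝ → ENNReal) (x : ℝ) :
    ∑ i ∈ Finset.range n, (S i).indicator h x ≤ U.indicator h x := by
  by_cases hx : ∃ i ∈ Finset.range n, x ∈ S i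
  · obtain ⟨i₀, hi₀, hxi₀⟩ := hx
    rw [Finset.sum_eq_single i₀]
    · rw [Set.indicator_of_mem hxi₀,
        Set.indicator_of_mem (hsub i₀ (Finset.mem_range.mp hi₀) hxi₀)]
    · intro b _ hb
      exact Set.indicator_of_notMem (hd i₀ b (Ne.symm hb) x hxi₀) h
    · intro hcon; exact absurd hi₀ hcon
  · push_neg at hx
    rw [Finset.sum_eq_zero fun i hi => Set.indicator_of_notMem (hx i hi) h]
    exact zero_le

/-- Subadditivity of `eVariationOn` for a sum of two functions. -/
lemma eVariationOn_add_le (f g : ℝ → ℝ) (s : Set ℝ) :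
    eVariationOn (fun x => f x + g x) s ≤ eVariationOn f s + eVariationOn g s := by
  rw [eVariationOn]
  refine iSup_le ?_
  rintro ⟨n, ⟨u, hu, hus⟩⟩
  calc ∑ i ∈ Finset.range n, edist (f (u (i + 1)) + g (u (i + 1))) (f (u i) + g (u i))
      ≤ ∑ i ∈ Finset.range n,
          (edist (f (u (i + 1))) (f (u i)) + edist (g (u (i + 1))) (g (u i))) :=
        Finset.sum_le_sum fun i _ => edist_add_add_le _ _ _ _
    _ = (∑ i ∈ Finset.range n, edist (f (u (i + 1))) (f (u i)))
        + ∑ i ∈ Finset.range n, edist (g (u (i + 1))) (g (u i)) := Finset.sum_add_distrib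
    _ ≤ eVariationOn f s + eVariationOn g s :=
        add_le_add (eVariationOn.sum_le (f := f) (n := n) hu hus) (eVariationOn.sum_le (f := g) (n := n) hu hus)

lemma ofReal_indicator (S : Set ℝ) (h : ℝ → ℝ) (x : ℝ) :
    ENNReal.ofReal (S.indicator h x) = S.indicator (fun y => ENNReal.ofReal (h y)) x := by
  by_cases hx : x ∈ S <;> simp [Set.indicator_apply, hx]

set_option maxHeartbeats 1000000 in
/-- The variation of the pure jump part over `Ioo l r` is at most the sum of the jumps there. -/
lemma jump_eVariationOn_le {um up : ℝ → ℝ} (hum : Summable fun x => |um x|)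
    (hup : Summable fun x => |up x|) (l r : ℝ) :
    eVariationOn (fun t => (∑' x, um x * deltaMinus x t) + (∑' x, up x * deltaPlus x t))
        (Set.Ioo l r)
      ≤ ∑' x, (Set.Ioo l r).indicator (fun x => ENNReal.ofReal (|um x| + |up x|)) x := by
  set G : ℝ → ℝ :=
    fun t => (∑' x, um x * deltaMinus x t) + (∑' x, up x * deltaPlus x t) with hG
  rw [eVariationOn]
  refine iSup_le ?_
  rintro ⟨n, ⟨u, hu, hus⟩⟩
  have key : ∀ i, edist (G (u (i + 1))) (G (u i))
      ≤ (∑' x, (Set.Ioc (u i) (u (i + 1))).indicator (fun y => ENNReal.ofReal (|um y|)) x)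
        + ∑' x, (Set.Ico (u i) (u (i + 1))).indicator (fun y => ENNReal.ofReal (|up y|)) x := by
    intro i
    have hst : u i ≤ u (i + 1) := hu (Nat.le_succ i)
    have hinc := jump_inc hum hup hst
    have habs : |G (u (i + 1)) - G (u i)|
        ≤ (∑' x, (Set.Ioc (u i) (u (i + 1))).indicator (fun y => |um y|) x)
          + ∑' x, (Set.Ico (u i) (u (i + 1))).indicator (fun y => |up y|) x := by
      rw [hG]
      simp only
      rw [hinc]
      refine le_trans (abs_add_le _ _) (add_le_add ?_ ?_)
      · exact abs_tsum_mul_indicator_le hum (le_refl _)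
      · exact abs_tsum_mul_indicator_le hup (le_refl _)
    have hsum1 : Summable fun x => (Set.Ioc (u i) (u (i + 1))).indicator (fun y => |um y|) x :=
      hum.indicator _
    have hsum2 : Summable fun x => (Set.Ico (u i) (u (i + 1))).indicator (fun y => |up y|) x :=
      hup.indicator _
    calc edist (G (u (i + 1))) (G (u i)) = ENNReal.ofReal (|G (u (i + 1)) - G (u i)|) := by
          rw [edist_dist, Real.dist_eq]
      _ ≤ ENNReal.ofReal ((∑' x, (Set.Ioc (u i) (u (i + 1))).indicator (fun y => |um y|) x)
            + ∑' x, (Set.Ico (u i) (u (i + 1))).indicator (fun y => |up y|) x) :=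
          ENNReal.ofReal_le_ofReal habs
      _ ≤ ENNReal.ofReal (∑' x, (Set.Ioc (u i) (u (i + 1))).indicator (fun y => |um y|) x)
            + ENNReal.ofReal (∑' x, (Set.Ico (u i) (u (i + 1))).indicator (fun y => |up y|) x) :=
          ENNReal.ofReal_add_le
      _ = (∑' x, (Set.Ioc (u i) (u (i + 1))).indicator (fun y => ENNReal.ofReal (|um y|)) x)
            + ∑' x, (Set.Ico (u i) (u (i + 1))).indicator (fun y => ENNReal.ofReal (|up y|)) x := by
          have e1 := ENNReal.ofReal_tsum_of_nonneg
            (f := fun x => (Set.Ioc (u i) (u (i + 1))).indicator (fun y => |um y|) x)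
            (fun x => Set.indicator_apply_nonneg fun _ => abs_nonneg _) hsum1
          have e2 := ENNReal.ofReal_tsum_of_nonneg
            (f := fun x => (Set.Ico (u i) (u (i + 1))).indicator (fun y => |up y|) x)
            (fun x => Set.indicator_apply_nonneg fun _ => abs_nonneg _) hsum2
          rw [e1, e2]
          congr 1 <;> exact tsum_congr fun x => ofReal_indicator _ _ x
  have hd1 : ∀ i j, i ≠ j → ∀ x,
      x ∈ Set.Ioc (u i) (u (i + 1)) → x ∉ Set.Ioc (u j) (u (j + 1)) := by
    intro i j hij x hxi hxj
    rcases lt_or_gt_of_ne hij with hlt | hlt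
    · have h1 : u (i + 1) ≤ u j := hu hlt
      have := hxi.2; have := hxj.1; linarith
    · have h1 : u (j + 1) ≤ u i := hu hlt
      have := hxj.2; have := hxi.1; linarith
  have hd2 : ∀ i j, i ≠ j → ∀ x,
      x ∈ Set.Ico (u i) (u (i + 1)) → x ∉ Set.Ico (u j) (u (j + 1)) := by
    intro i j hij x hxi hxj
    rcases lt_or_gt_of_ne hij with hlt | hlt
    · have h1 : u (i + 1) ≤ u j := hu hlt
      have := hxi.2; have := hxj.1; linarith
    · have h1 : u (j + 1) ≤ u i := hu hlt
      have := hxj.2; have := hxi.1; linarith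
  have hsub1 : ∀ i, i < n → Set.Ioc (u i) (u (i + 1)) ⊆ Set.Ioo l r := by
    intro i _ y hy
    exact ⟨lt_of_lt_of_le (hus i).1 hy.1.le, lt_of_le_of_lt hy.2 (hus (i + 1)).2⟩
  have hsub2 : ∀ i, i < n → Set.Ico (u i) (u (i + 1)) ⊆ Set.Ioo l r := by
    intro i _ y hy
    exact ⟨lt_of_lt_of_le (hus i).1 hy.1, lt_of_lt_of_le hy.2 (hus (i + 1)).2.le⟩
  calc ∑ i ∈ Finset.range n, edist (G (u (i + 1))) (G (u i))
      ≤ ∑ i ∈ Finset.range n,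
          ((∑' x, (Set.Ioc (u i) (u (i + 1))).indicator (fun y => ENNReal.ofReal (|um y|)) x)
            + ∑' x, (Set.Ico (u i) (u (i + 1))).indicator (fun y => ENNReal.ofReal (|up y|)) x) :=
        Finset.sum_le_sum fun i _ => key i
    _ = (∑ i ∈ Finset.range n,
          ∑' x, (Set.Ioc (u i) (u (i + 1))).indicator (fun y => ENNReal.ofReal (|um y|)) x)
        + ∑ i ∈ Finset.range n,
          ∑' x, (Set.Ico (u i) (u (i + 1))).indicator (fun y => ENNReal.ofReal (|up y|)) x :=
        Finset.sum_add_distrib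
    _ = (∑' x, ∑ i ∈ Finset.range n,
          (Set.Ioc (u i) (u (i + 1))).indicator (fun y => ENNReal.ofReal (|um y|)) x)
        + ∑' x, ∑ i ∈ Finset.range n,
          (Set.Ico (u i) (u (i + 1))).indicator (fun y => ENNReal.ofReal (|up y|)) x := by
        rw [Summable.tsum_finsetSum fun i _ => ENNReal.summable, Summable.tsum_finsetSum fun i _ => ENNReal.summable]
    _ ≤ (∑' x, (Set.Ioo l r).indicator (fun y => ENNReal.ofReal (|um y|)) x)
        + ∑' x, (Set.Ioo l r).indicator (fun y => ENNReal.ofReal (|up y|)) x := by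
        refine add_le_add (ENNReal.tsum_le_tsum fun x => ?_) (ENNReal.tsum_le_tsum fun x => ?_)
        · exact sum_indicator_le hd1 hsub1 _ x
        · exact sum_indicator_le hd2 hsub2 _ x
    _ = ∑' x, (Set.Ioo l r).indicator (fun x => ENNReal.ofReal (|um x| + |up x|)) x := by
        rw [← ENNReal.tsum_add]
        refine tsum_congr fun x => ?_
        by_cases hx : x ∈ Set.Ioo l r <;>
          simp [Set.indicator_apply, hx, ENNReal.ofReal_add, abs_nonneg]

set_option maxHeartbeats 1000000 in
/-- For `f` continuous at `a`, adding the right endpoint `a` to `Ioo s a` adds nothing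
(up to `ε`) to the variation. -/
lemma evar_Ioc_le_Ioo {f : ℝ → ℝ} {a : ℝ} (hf : ContinuousAt f a) {s : ℝ} (hs : s < a)
    {ε : ℝ} (hε : 0 < ε) :
    eVariationOn f (Set.Ioc s a) ≤ eVariationOn f (Set.Ioo s a) + ENNReal.ofReal ε := by
  rw [eVariationOn]
  refine iSup_le ?_
  rintro ⟨n, ⟨u, hu, hus⟩⟩
  set ε' : ℝ := ε / (2 * n + 2) with hε'
  have h2n : (0:ℝ) < 2 * (n:ℝ) + 2 := by positivity
  have hε'pos : 0 < ε' := by positivity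
  obtain ⟨η, hη, hη2⟩ := Metric.continuousAt_iff.mp hf ε' hε'pos
  set s' : ℝ := (s + a) / 2 with hs'
  set B : Finset ℝ :=
    insert s' (((Finset.range (n + 1)).image u).filter (fun y => y < a)) with hB
  have hBne : B.Nonempty := ⟨s', Finset.mem_insert_self _ _⟩
  set m := B.max' hBne with hm
  have hs'a : s' < a := by rw [hs']; linarith
  have hss' : s < s' := by rw [hs']; linarith
  have hma : m < a := by
    rw [hm, Finset.max'_lt_iff]
    intro y hy
    rcases Finset.mem_insert.mp hy with h | h
    · rw [h]; exact hs'a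
    · exact (Finset.mem_filter.mp h).2
  have hsm : s < m := lt_of_lt_of_le hss' (B.le_max' s' (Finset.mem_insert_self _ _))
  set t := max m (a - η / 2) with ht
  have hta : t < a := max_lt hma (by linarith)
  have hst' : s < t := lt_of_lt_of_le hsm (le_max_left _ _)
  have htdist : dist t a < η := by
    rw [Real.dist_eq, abs_of_nonpos (by linarith)]
    have : a - η / 2 ≤ t := le_max_right _ _
    linarith
  have hub : ∀ i, i ≤ n → u i ≤ t ∨ u i = a := by
    intro i hi
    by_cases h : u i < a
    · left
      have hmem : u i ∈ B := Finset.mem_insert_of_mem (Finset.mem_filter.mpr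
        ⟨Finset.mem_image_of_mem u (Finset.mem_range.mpr (Nat.lt_succ_of_le hi)), h⟩)
      exact le_trans (B.le_max' _ hmem) (le_max_left _ _)
    · right; exact le_antisymm (hus i).2 (not_lt.mp h)
  set v : ℕ → ℝ := fun i => min (u i) t with hv
  have hvmono : Monotone v := fun i j hij => min_le_min (hu hij) le_rfl
  have hvmem : ∀ i, v i ∈ Set.Ioo s a := fun i =>
    ⟨lt_min (hus i).1 hst', lt_of_le_of_lt (min_le_right _ _) hta⟩
  have hcorr : ∀ i, i ≤ n → edist (f (u i)) (f (v i)) ≤ ENNReal.ofReal ε' := by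
    intro i hi
    rcases hub i hi with h | h
    · have : v i = u i := min_eq_left h
      rw [this, edist_self]
      exact zero_le
    · have hvt : v i = t := by rw [hv]; simp only; rw [h, min_eq_right hta.le]
      rw [h, hvt, edist_dist]
      apply ENNReal.ofReal_le_ofReal
      have hft : dist (f t) (f a) < ε' := hη2 htdist
      rw [dist_comm] at hft
      exact hft.le
  have harith : 2 * (n:ℝ) * ε' ≤ ε := by
    have h1 : 2 * (n:ℝ) * ε' ≤ (2 * (n:ℝ) + 2) * ε' := by nlinarith [hε'pos.le]
    have heq : (2 * (n:ℝ) + 2) * ε' = ε := by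
      rw [hε']; field_simp
    linarith
  calc ∑ i ∈ Finset.range n, edist (f (u (i + 1))) (f (u i))
      ≤ ∑ i ∈ Finset.range n, (edist (f (u (i + 1))) (f (v (i + 1)))
          + edist (f (v (i + 1))) (f (v i)) + edist (f (v i)) (f (u i))) := by
        exact Finset.sum_le_sum fun i _ => edist_triangle4 _ _ _ _
    _ = (∑ i ∈ Finset.range n, (edist (f (u (i + 1))) (f (v (i + 1)))
          + edist (f (v (i + 1))) (f (v i))))
        + ∑ i ∈ Finset.range n, edist (f (v i)) (f (u i)) := Finset.sum_add_distrib
    _ = ((∑ i ∈ Finset.range n, edist (f (u (i + 1))) (f (v (i + 1))))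
        + ∑ i ∈ Finset.range n, edist (f (v (i + 1))) (f (v i)))
        + ∑ i ∈ Finset.range n, edist (f (v i)) (f (u i)) := by rw [Finset.sum_add_distrib]
    _ ≤ (n • ENNReal.ofReal ε' + eVariationOn f (Set.Ioo s a)) + n • ENNReal.ofReal ε' := by
        refine add_le_add (add_le_add ?_ ?_) ?_
        · have := Finset.sum_le_card_nsmul (Finset.range n)
            (fun i => edist (f (u (i + 1))) (f (v (i + 1)))) (ENNReal.ofReal ε')
            (fun i hi => hcorr (i + 1) (Nat.succ_le_of_lt (Finset.mem_range.mp hi)))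
          simpa [Finset.card_range] using this
        · exact eVariationOn.sum_le (f := f) (n := n) hvmono fun i => hvmem i
        · have := Finset.sum_le_card_nsmul (Finset.range n)
            (fun i => edist (f (v i)) (f (u i))) (ENNReal.ofReal ε')
            (fun i hi => by
              rw [edist_comm]
              exact hcorr i (Nat.le_of_lt (Finset.mem_range.mp hi)))
          simpa [Finset.card_range] using this
    _ = eVariationOn f (Set.Ioo s a) + (n • ENNReal.ofReal ε' + n • ENNReal.ofReal ε') := by
        ring
    _ ≤ eVariationOn f (Set.Ioo s a) + ENNReal.ofReal ε := by
        refine add_le_add_right ?_ _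
        have : n • ENNReal.ofReal ε' + n • ENNReal.ofReal ε'
            = ENNReal.ofReal (2 * (n:ℝ) * ε') := by
          rw [← add_nsmul, nsmul_eq_mul, ← ENNReal.ofReal_natCast,
            ← ENNReal.ofReal_mul (by positivity)]
          congr 1
          push_cast
          ring
        rw [this]
        exact ENNReal.ofReal_le_ofReal harith

/-- The variation on `Ioo s₀ a` is approximated by variations on `Ioc s₀ s`, `s < a`. -/
lemma evar_Ioo_le_Ioc {f : ℝ → ℝ} {s₀ a : ℝ} (hs₀ : s₀ < a)
    (hfin : eVariationOn f (Set.Ioo s₀ a) ≠ ⊤) {ε : ℝ} (hε : 0 < ε) :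
    ∃ s ∈ Set.Ioo s₀ a,
      eVariationOn f (Set.Ioo s₀ a) ≤ eVariationOn f (Set.Ioc s₀ s) + ENNReal.ofReal ε := by
  by_cases hz : eVariationOn f (Set.Ioo s₀ a) ≤ ENNReal.ofReal ε
  · exact ⟨(s₀ + a) / 2, ⟨by linarith, by linarith⟩, le_trans hz le_add_self⟩
  · push_neg at hz
    have hlt : eVariationOn f (Set.Ioo s₀ a) - ENNReal.ofReal ε
        < eVariationOn f (Set.Ioo s₀ a) :=
      ENNReal.sub_lt_self hfin (ne_of_gt (lt_of_le_of_lt (zero_le) hz))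
        (ENNReal.ofReal_pos.mpr hε).ne'
    conv_rhs at hlt => rw [eVariationOn]
    obtain ⟨⟨n, ⟨u, hu, hus⟩⟩, hsum⟩ := lt_iSup_iff.mp hlt
    refine ⟨u n, hus n, ?_⟩
    have hsum_le : ∑ i ∈ Finset.range n, edist (f (u (i + 1))) (f (u i))
        ≤ eVariationOn f (Set.Ioc s₀ (u n)) := by
      set v : ℕ → ℝ := fun i => u (min i n) with hv
      have hvmono : Monotone v := fun i j hij => hu (min_le_min hij le_rfl)
      have hvmem : ∀ i, v i ∈ Set.Ioc s₀ (u n) := fun i => ⟨(hus _).1, hu (min_le_right i n)⟩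
      have heq : ∑ i ∈ Finset.range n, edist (f (u (i + 1))) (f (u i))
          = ∑ i ∈ Finset.range n, edist (f (v (i + 1))) (f (v i)) := by
        refine Finset.sum_congr rfl fun i hi => ?_
        have hi' := Finset.mem_range.mp hi
        have e1 : v (i + 1) = u (i + 1) := by
          rw [hv]; simp only; rw [min_eq_left (Nat.succ_le_of_lt hi')]
        have e2 : v i = u i := by
          rw [hv]; simp only; rw [min_eq_left hi'.le]
        rw [e1, e2]
      rw [heq]
      exact eVariationOn.sum_le (f := f) (n := n) hvmono hvmem
    have h1 : eVariationOn f (Set.Ioo s₀ a) - ENNReal.ofReal ε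
        ≤ eVariationOn f (Set.Ioc s₀ (u n)) := le_of_lt (lt_of_lt_of_le hsum hsum_le)
    exact tsub_le_iff_right.mp h1

/-- Left local variation of a continuous BV function is arbitrarily small. -/
lemma left_var_small {f : ℝ → ℝ} (hf : Continuous f)
    (hbv : BoundedVariationOn f Set.univ) (a : ℝ) {ε : ℝ} (hε : 0 < ε) :
    ∃ δ > 0, eVariationOn f (Set.Ioc (a - δ) a) ≤ ENNReal.ofReal ε := by
  have hfin : ∀ S : Set ℝ, eVariationOn f S ≠ ⊤ := fun S =>
    hbv.mono (Set.subset_univ S)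
  set s₀ := a - 1 with hs₀def
  have hs₀ : s₀ < a := by rw [hs₀def]; linarith
  have hC3 := evar_Ioc_le_Ioo hf.continuousAt hs₀ (half_pos hε)
  obtain ⟨s, hsmem, hC4⟩ := evar_Ioo_le_Ioc hs₀ (hfin _) (half_pos hε)
  have hunion : eVariationOn f (Set.Ioc s₀ s) + eVariationOn f (Set.Icc s a)
      = eVariationOn f (Set.Ioc s₀ a) := by
    have hgreat : IsGreatest (Set.Ioc s₀ s) s := ⟨⟨hsmem.1, le_refl s⟩, fun y hy => hy.2⟩
    have hleast : IsLeast (Set.Icc s a) s := ⟨⟨le_refl s, hsmem.2.le⟩, fun y hy => hy.1⟩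
    rw [← eVariationOn.union f hgreat hleast,
      Set.Ioc_union_Icc_eq_Ioc hsmem.1 hsmem.2.le]
  have key : eVariationOn f (Set.Icc s a) ≤ ENNReal.ofReal ε := by
    have h1 : eVariationOn f (Set.Ioc s₀ s) + eVariationOn f (Set.Icc s a)
        ≤ eVariationOn f (Set.Ioc s₀ s)
          + (ENNReal.ofReal (ε / 2) + ENNReal.ofReal (ε / 2)) := by
      rw [hunion]
      calc eVariationOn f (Set.Ioc s₀ a)
          ≤ eVariationOn f (Set.Ioo s₀ a) + ENNReal.ofReal (ε / 2) := hC3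
        _ ≤ (eVariationOn f (Set.Ioc s₀ s) + ENNReal.ofReal (ε / 2))
            + ENNReal.ofReal (ε / 2) := add_le_add_left hC4 _
        _ = eVariationOn f (Set.Ioc s₀ s)
            + (ENNReal.ofReal (ε / 2) + ENNReal.ofReal (ε / 2)) := add_assoc _ _ _
    have h2 := (ENNReal.add_le_add_iff_left (hfin _)).mp h1
    calc eVariationOn f (Set.Icc s a)
        ≤ ENNReal.ofReal (ε / 2) + ENNReal.ofReal (ε / 2) := h2
      _ = ENNReal.ofReal ε := by
          rw [← ENNReal.ofReal_add (by linarith) (by linarith)]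
          norm_num
  refine ⟨a - s, by linarith [hsmem.2], ?_⟩
  have hid : a - (a - s) = s := by ring
  rw [hid]
  exact le_trans (eVariationOn.mono f Set.Ioc_subset_Icc_self) key

/-- Right local variation of a continuous BV function is arbitrarily small. -/
lemma right_var_small {f : ℝ → ℝ} (hf : Continuous f)
    (hbv : BoundedVariationOn f Set.univ) (a : ℝ) {ε : ℝ} (hε : 0 < ε) :
    ∃ δ > 0, eVariationOn f (Set.Ico a (a + δ)) ≤ ENNReal.ofReal ε := by
  have hanti : ∀ S : Set ℝ, AntitoneOn (Neg.neg : ℝ → ℝ) S :=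
    fun S x _ y _ hxy => neg_le_neg hxy
  have hcomp : ∀ S : Set ℝ,
      eVariationOn (fun x => f (-x)) S = eVariationOn f (Neg.neg '' S) := fun S =>
    eVariationOn.comp_eq_of_antitoneOn f (Neg.neg : ℝ → ℝ) (hanti S)
  have hgc : Continuous fun x : ℝ => f (-x) := hf.comp continuous_neg
  have hgbv : BoundedVariationOn (fun x => f (-x)) Set.univ := by
    unfold BoundedVariationOn
    rw [hcomp, Set.image_univ, neg_surjective.range_eq]
    exact hbv
  obtain ⟨δ, hδ, hδle⟩ := left_var_small hgc hgbv (-a) hε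
  refine ⟨δ, hδ, ?_⟩
  have himg : Neg.neg '' Set.Ioc (-a - δ) (-a) = Set.Ico a (a + δ) := by
    rw [Set.image_neg_Ioc]
    congr 1 <;> ring
  rw [← himg, ← hcomp]
  exact hδle

lemma Ioc_diff_right {s a : ℝ} : Set.Ioc s a \ {a} = Set.Ioo s a := by
  ext x
  constructor
  · rintro ⟨⟨h1, h2⟩, h3⟩
    exact ⟨h1, lt_of_le_of_ne h2 (by simpa using h3)⟩
  · rintro ⟨h1, h2⟩
    exact ⟨⟨h1, h2.le⟩, by simp [ne_of_lt h2]⟩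

lemma Ico_diff_left {a t : ℝ} : Set.Ico a t \ {a} = Set.Ioo a t := by
  ext x
  constructor
  · rintro ⟨⟨h1, h2⟩, h3⟩
    exact ⟨lt_of_le_of_ne h1 (by simpa using (Ne.symm (by simpa using h3))), h2⟩
  · rintro ⟨h1, h2⟩
    exact ⟨⟨h1.le, h2⟩, by simp [ne_of_gt h1]⟩

lemma exists_finset_tail {g : ℝ → ℝ} (hg : Summable g) {ε : ℝ} (hε : 0 < ε) :
    ∃ T : Finset ℝ, ∑' x, ((T : Set ℝ)ᶜ).indicator g x < ε := by
  have htend := tendsto_tsum_compl_atTop_zero g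
  have hev := htend.eventually (gt_mem_nhds hε)
  obtain ⟨T, hT⟩ := hev.exists
  refine ⟨T, ?_⟩
  have : ∑' x : ((T : Set ℝ)ᶜ : Set ℝ), g x = ∑' x, ((T : Set ℝ)ᶜ).indicator g x :=
    tsum_subtype _ g
  rw [← this]
  exact lt_of_le_of_lt (le_of_eq (tsum_congr fun x => rfl)) hT

lemma exists_lb (T : Finset ℝ) (a : ℝ) : ∃ s₀ < a, ∀ x ∈ T, x < a → x ≤ s₀ := by
  classical
  set T' := T.filter (fun x => x < a) with hT'
  by_cases h : T'.Nonempty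
  · refine ⟨T'.max' h, (Finset.mem_filter.mp (T'.max'_mem h)).2, ?_⟩
    intro x hx hxa
    exact Finset.le_max' T' x (Finset.mem_filter.mpr ⟨hx, hxa⟩)
  · exact ⟨a - 1, by linarith, fun x hx hxa =>
      absurd ⟨x, Finset.mem_filter.mpr ⟨hx, hxa⟩⟩ h⟩

lemma exists_ub (T : Finset ℝ) (a : ℝ) : ∃ t₀, a < t₀ ∧ ∀ x ∈ T, a < x → t₀ ≤ x := by
  classical
  set T' := T.filter (fun x => a < x) with hT'
  by_cases h : T'.Nonempty
  · refine ⟨T'.min' h, (Finset.mem_filter.mp (T'.min'_mem h)).2, ?_⟩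
    intro x hx hxa
    exact Finset.min'_le T' x (Finset.mem_filter.mpr ⟨hx, hxa⟩)
  · exact ⟨a + 1, by linarith, fun x hx hxa =>
      absurd ⟨x, Finset.mem_filter.mpr ⟨hx, hxa⟩⟩ h⟩

lemma indicator_abs_tsum_add {um up : ℝ → ℝ} (hum : Summable fun x => |um x|)
    (hup : Summable fun x => |up x|) (S : Set ℝ) :
    (∑' x, S.indicator (fun y => |um y|) x) + (∑' x, S.indicator (fun y => |up y|) x)
      = ∑' x, S.indicator (fun y => |um y| + |up y|) x := by
  rw [← Summable.tsum_add (hum.indicator S) (hup.indicator S)]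
  refine tsum_congr fun x => ?_
  by_cases hx : x ∈ S <;> simp [Set.indicator_apply, hx]

end UsefulAux

/-- Increment formula for a useful function. -/
lemma F_inc {F f um up : ℝ → ℝ} (h : IsUseful F f um up) {s t : ℝ} (hst : s ≤ t) :
    F t - F s = (f t - f s) + ((∑' x, um x * (Set.Ioc s t).indicator 1 x)
      + ∑' x, up x * (Set.Ico s t).indicator 1 x) := by
  rw [h.decomp t, h.decomp s, ← UsefulAux.jump_inc h.summable_um h.summable_up hst]
  ring

open UsefulAux in
set_option maxHeartbeats 2000000 in
/-- The local variation of a useful function `F` at `a` is `|u_a⁻| + |u_a⁺|`. -/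
theorem useful_local_variation (F f um up : ℝ → ℝ) (h : IsUseful F f um up) (a : ℝ) :
    Tendsto (fun δ : ℝ => eVariationOn F (Set.Ioo (a - δ) (a + δ)))
      (nhdsWithin 0 (Set.Ioi 0)) (nhds (ENNReal.ofReal (|um a| + |up a|))) := by
  classical
  have hum := h.summable_um
  have hup := h.summable_up
  have hg : Summable fun x => |um x| + |up x| := hum.add hup
  set L := ENNReal.ofReal (|um a| + |up a|) with hL
  rw [ENNReal.tendsto_nhds ENNReal.ofReal_ne_top]
  intro ε hε
  obtain ⟨ε₁, hε₁, hε₁le⟩ : ∃ r : ℝ, 0 < r ∧ ENNReal.ofReal r ≤ ε := by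
    rcases eq_or_ne ε ⊤ with hT | hT
    · exact ⟨1, one_pos, by simp [hT]⟩
    · have htp := ENNReal.toReal_pos hε.ne' hT
      refine ⟨ε.toReal / 2, by linarith, ?_⟩
      calc ENNReal.ofReal (ε.toReal / 2) ≤ ENNReal.ofReal ε.toReal :=
            ENNReal.ofReal_le_ofReal (by linarith)
        _ = ε := ENNReal.ofReal_toReal hT
  obtain ⟨T, hT⟩ := exists_finset_tail hg (show (0:ℝ) < ε₁ / 8 by linarith)
  obtain ⟨s₀, hs₀a, hs₀⟩ := exists_lb T a
  obtain ⟨t₀, ht₀a, ht₀⟩ := exists_ub T a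
  obtain ⟨δL, hδL, hδLvar⟩ := left_var_small h.cont h.bddVar a
    (show (0:ℝ) < ε₁ / 8 by linarith)
  obtain ⟨δR, hδR, hδRvar⟩ := right_var_small h.cont h.bddVar a
    (show (0:ℝ) < ε₁ / 8 by linarith)
  obtain ⟨η, hη, hη2⟩ := Metric.continuousAt_iff.mp h.cont.continuousAt (ε₁ / 8)
    (by linarith)
  set δ₀ := min (min δL δR) (min (min (a - s₀) (t₀ - a)) η) with hδ₀def
  have hδ₀pos : 0 < δ₀ := by
    refine lt_min (lt_min hδL hδR) (lt_min (lt_min ?_ ?_) hη) <;> linarith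
  filter_upwards [Ioo_mem_nhdsGT hδ₀pos] with δ hδmem
  obtain ⟨hδpos, hδlt⟩ := hδmem
  have hδδL : δ ≤ δL := hδlt.le.trans ((min_le_left _ _).trans (min_le_left _ _))
  have hδδR : δ ≤ δR := hδlt.le.trans ((min_le_left _ _).trans (min_le_right _ _))
  have hδs₀ : δ ≤ a - s₀ := hδlt.le.trans
    ((min_le_right _ _).trans ((min_le_left _ _).trans (min_le_left _ _)))
  have hδt₀ : δ ≤ t₀ - a := hδlt.le.trans
    ((min_le_right _ _).trans ((min_le_left _ _).trans (min_le_right _ _)))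
  have hδη : δ ≤ η := hδlt.le.trans ((min_le_right _ _).trans (min_le_right _ _))
  have hla : a - δ < a := by linarith
  have har : a < a + δ := by linarith
  set l := a - δ with hldef
  set r := a + δ with hrdef
  set G : ℝ → ℝ := fun t => (∑' x, um x * deltaMinus x t) + ∑' x, up x * deltaPlus x t
    with hGdef
  have hFG : F = fun t => f t + G t := funext fun t => by rw [h.decomp t]; exact add_assoc _ _ _
  -- upper bound
  have hsubT : Set.Ioo l r \ {a} ⊆ ((T : Set ℝ)ᶜ) := by
    rintro x ⟨⟨hx1, hx2⟩, hx3⟩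
    simp only [Set.mem_compl_iff, Finset.mem_coe]
    intro hxT
    rcases lt_trichotomy x a with hlt | heq | hgt
    · have := hs₀ x hxT hlt
      linarith
    · exact hx3 (by simp [heq])
    · have := ht₀ x hxT hgt
      linarith
  have htailE : ∑' x, ((T : Set ℝ)ᶜ).indicator (fun y => ENNReal.ofReal (|um y| + |up y|)) x
      ≤ ENNReal.ofReal (ε₁ / 8) := by
    have hsum := hg.indicator ((T : Set ℝ)ᶜ)
    have heq := ENNReal.ofReal_tsum_of_nonneg
      (f := fun x => ((T : Set ℝ)ᶜ).indicator (fun y => |um y| + |up y|) x)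
      (fun x => Set.indicator_apply_nonneg fun _ => by positivity) hsum
    calc ∑' x, ((T : Set ℝ)ᶜ).indicator (fun y => ENNReal.ofReal (|um y| + |up y|)) x
        = ∑' x, ENNReal.ofReal (((T : Set ℝ)ᶜ).indicator (fun y => |um y| + |up y|) x) :=
          tsum_congr fun x => (ofReal_indicator _ _ x).symm
      _ = ENNReal.ofReal (∑' x, ((T : Set ℝ)ᶜ).indicator (fun y => |um y| + |up y|) x) :=
          heq.symm
      _ ≤ ENNReal.ofReal (ε₁ / 8) := ENNReal.ofReal_le_ofReal hT.le
  have hjump_tsum :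
      ∑' x, (Set.Ioo l r).indicator (fun y => ENNReal.ofReal (|um y| + |up y|)) x
        ≤ L + ENNReal.ofReal (ε₁ / 8) := by
    have hpt : ∀ x, (Set.Ioo l r).indicator (fun y => ENNReal.ofReal (|um y| + |up y|)) x
        ≤ ({a} : Set ℝ).indicator (fun y => ENNReal.ofReal (|um y| + |up y|)) x
          + ((T : Set ℝ)ᶜ).indicator (fun y => ENNReal.ofReal (|um y| + |up y|)) x := by
      intro x
      by_cases hxa : x = a
      · subst hxa
        calc (Set.Ioo l r).indicator (fun y => ENNReal.ofReal (|um y| + |up y|)) x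
            ≤ ENNReal.ofReal (|um x| + |up x|) := by
              by_cases hm : x ∈ Set.Ioo l r <;> simp [Set.indicator_apply, hm]
          _ = ({x} : Set ℝ).indicator (fun y => ENNReal.ofReal (|um y| + |up y|)) x :=
              (Set.indicator_of_mem (Set.mem_singleton x) (fun y => ENNReal.ofReal (|um y| + |up y|))).symm
          _ ≤ _ := self_le_add_right _ _
      · by_cases hm : x ∈ Set.Ioo l r
        · have hxc : x ∈ (T : Set ℝ)ᶜ := hsubT ⟨hm, by simp [hxa]⟩
          rw [Set.indicator_of_mem hm, Set.indicator_of_notMem (by simp [hxa]),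
            Set.indicator_of_mem hxc, zero_add]
        · rw [Set.indicator_of_notMem hm]
          exact zero_le
    calc ∑' x, (Set.Ioo l r).indicator (fun y => ENNReal.ofReal (|um y| + |up y|)) x
        ≤ ∑' x, (({a} : Set ℝ).indicator (fun y => ENNReal.ofReal (|um y| + |up y|)) x
            + ((T : Set ℝ)ᶜ).indicator (fun y => ENNReal.ofReal (|um y| + |up y|)) x) :=
          ENNReal.tsum_le_tsum hpt
      _ = (∑' x, ({a} : Set ℝ).indicator (fun y => ENNReal.ofReal (|um y| + |up y|)) x)
          + ∑' x, ((T : Set ℝ)ᶜ).indicator (fun y => ENNReal.ofReal (|um y| + |up y|)) x :=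
          ENNReal.tsum_add
      _ ≤ L + ENNReal.ofReal (ε₁ / 8) := by
          refine add_le_add ?_ htailE
          rw [tsum_eq_single a (fun b hb => Set.indicator_of_notMem (by simp [hb]) _),
            Set.indicator_of_mem (Set.mem_singleton a)]
  have hupper : eVariationOn F (Set.Ioo l r) ≤ L + ε := by
    have hgreat : IsGreatest (Set.Ioc l a) a := ⟨⟨hla, le_refl a⟩, fun y hy => hy.2⟩
    have hleast : IsLeast (Set.Ico a r) a := ⟨⟨le_refl a, har⟩, fun y hy => hy.1⟩
    have hsplitf : eVariationOn f (Set.Ioo l r)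
        = eVariationOn f (Set.Ioc l a) + eVariationOn f (Set.Ico a r) := by
      rw [← eVariationOn.union f hgreat hleast, Set.Ioc_union_Ico_eq_Ioo hla har]
    have hfL : eVariationOn f (Set.Ioc l a) ≤ ENNReal.ofReal (ε₁ / 8) := by
      refine le_trans (eVariationOn.mono f ?_) hδLvar
      intro y hy
      have hle : a - δL ≤ l := by rw [hldef]; linarith
      exact ⟨lt_of_le_of_lt hle hy.1, hy.2⟩
    have hfR : eVariationOn f (Set.Ico a r) ≤ ENNReal.ofReal (ε₁ / 8) := by
      refine le_trans (eVariationOn.mono f ?_) hδRvar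
      intro y hy
      have hle : r ≤ a + δR := by rw [hrdef]; linarith
      exact ⟨hy.1, lt_of_lt_of_le hy.2 hle⟩
    have hjump : eVariationOn G (Set.Ioo l r)
        ≤ ∑' x, (Set.Ioo l r).indicator (fun x => ENNReal.ofReal (|um x| + |up x|)) x :=
      jump_eVariationOn_le hum hup l r
    calc eVariationOn F (Set.Ioo l r)
        = eVariationOn (fun t => f t + G t) (Set.Ioo l r) := by rw [← hFG]
      _ ≤ eVariationOn f (Set.Ioo l r) + eVariationOn G (Set.Ioo l r) :=
          eVariationOn_add_le f G _
      _ ≤ (ENNReal.ofReal (ε₁ / 8) + ENNReal.ofReal (ε₁ / 8))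
          + (L + ENNReal.ofReal (ε₁ / 8)) := by
          refine add_le_add ?_ (le_trans hjump hjump_tsum)
          rw [hsplitf]
          exact add_le_add hfL hfR
      _ = L + (ENNReal.ofReal (ε₁ / 8) + ENNReal.ofReal (ε₁ / 8)
          + ENNReal.ofReal (ε₁ / 8)) := by ring
      _ ≤ L + ε := by
          refine add_le_add_right (le_trans ?_ hε₁le) L
          rw [← ENNReal.ofReal_add (by linarith) (by linarith),
            ← ENNReal.ofReal_add (by linarith) (by linarith)]
          exact ENNReal.ofReal_le_ofReal (by linarith)
  -- lower bound
  set s := a - δ / 2 with hsdef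
  set t := a + δ / 2 with htdef
  have hsl : l < s := by rw [hldef, hsdef]; linarith
  have hsa : s < a := by rw [hsdef]; linarith
  have hat : a < t := by rw [htdef]; linarith
  have htr : t < r := by rw [htdef, hrdef]; linarith
  have hIcoT : Set.Ico s a ⊆ ((T : Set ℝ)ᶜ) := by
    intro x hx
    simp only [Set.mem_compl_iff, Finset.mem_coe]
    intro hxT
    have h1 := hs₀ x hxT hx.2
    have h2 := hx.1
    rw [hsdef] at h2
    linarith
  have hIocT : Set.Ioc a t ⊆ ((T : Set ℝ)ᶜ) := by
    intro x hx
    simp only [Set.mem_compl_iff, Finset.mem_coe]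
    intro hxT
    have h1 := ht₀ x hxT hx.1
    have h2 := hx.2
    rw [htdef] at h2
    linarith
  have hIooL : Set.Ioo s a ⊆ ((T : Set ℝ)ᶜ) := fun x hx => hIcoT ⟨hx.1.le, hx.2⟩
  have hIooR : Set.Ioo a t ⊆ ((T : Set ℝ)ᶜ) := fun x hx => hIocT ⟨hx.1, hx.2.le⟩
  have hRsum : (∑' x, ((T : Set ℝ)ᶜ).indicator (fun y => |um y|) x)
      + (∑' x, ((T : Set ℝ)ᶜ).indicator (fun y => |up y|) x) < ε₁ / 8 := by
    rw [indicator_abs_tsum_add hum hup]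
    exact hT
  have hkey1 : |um a| ≤ |F a - F s| + ε₁ / 4 := by
    have hinc := F_inc h hsa.le
    have hsplit : ∑' x, um x * (Set.Ioc s a).indicator 1 x
        = um a + ∑' x, um x * (Set.Ioo s a).indicator 1 x := by
      have := tsum_split_pt hum (show a ∈ Set.Ioc s a from ⟨hsa, le_refl a⟩)
      rwa [Ioc_diff_right] at this
    have hfs : |f a - f s| ≤ ε₁ / 8 := by
      have hd : dist s a < η := by
        rw [Real.dist_eq, abs_of_nonpos (by rw [hsdef]; linarith)]
        rw [hsdef]; linarith
      have := hη2 hd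
      rw [Real.dist_eq] at this
      rw [abs_sub_comm]
      linarith
    have hR1 := abs_tsum_mul_indicator_le hum hIooL
    have hR2 := abs_tsum_mul_indicator_le hup hIcoT
    have hkey : |F a - F s - um a| ≤ ε₁ / 4 := by
      have heq : F a - F s - um a = (f a - f s)
          + ((∑' x, um x * (Set.Ioo s a).indicator 1 x)
            + ∑' x, up x * (Set.Ico s a).indicator 1 x) := by
        rw [hinc, hsplit]; ring
      rw [heq]
      have h1 := abs_add_le (f a - f s) ((∑' x, um x * (Set.Ioo s a).indicator 1 x)
        + ∑' x, up x * (Set.Ico s a).indicator 1 x)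
      have h2 := abs_add_le (∑' x, um x * (Set.Ioo s a).indicator 1 x)
        (∑' x, up x * (Set.Ico s a).indicator 1 x)
      linarith
    have heq2 : um a = (F a - F s) - (F a - F s - um a) := by ring
    calc |um a| = |(F a - F s) - (F a - F s - um a)| := by rw [← heq2]
      _ ≤ |F a - F s| + |F a - F s - um a| := by
          rw [sub_eq_add_neg]
          exact le_of_le_of_eq (abs_add_le _ _) (by rw [abs_neg])
      _ ≤ |F a - F s| + ε₁ / 4 := by linarith
  have hkey2 : |up a| ≤ |F t - F a| + ε₁ / 4 := by
    have hinc := F_inc h hat.le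
    have hsplit : ∑' x, up x * (Set.Ico a t).indicator 1 x
        = up a + ∑' x, up x * (Set.Ioo a t).indicator 1 x := by
      have := tsum_split_pt hup (show a ∈ Set.Ico a t from ⟨le_refl a, hat⟩)
      rwa [Ico_diff_left] at this
    have hft : |f t - f a| ≤ ε₁ / 8 := by
      have hd : dist t a < η := by
        rw [Real.dist_eq, abs_of_nonneg (by rw [htdef]; linarith)]
        rw [htdef]; linarith
      have := hη2 hd
      rw [Real.dist_eq] at this
      linarith
    have hR1 := abs_tsum_mul_indicator_le hum hIocT
    have hR2 := abs_tsum_mul_indicator_le hup hIooR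
    have hkey : |F t - F a - up a| ≤ ε₁ / 4 := by
      have heq : F t - F a - up a = (f t - f a)
          + ((∑' x, um x * (Set.Ioc a t).indicator 1 x)
            + ∑' x, up x * (Set.Ioo a t).indicator 1 x) := by
        rw [hinc, hsplit]; ring
      rw [heq]
      have h1 := abs_add_le (f t - f a) ((∑' x, um x * (Set.Ioc a t).indicator 1 x)
        + ∑' x, up x * (Set.Ioo a t).indicator 1 x)
      have h2 := abs_add_le (∑' x, um x * (Set.Ioc a t).indicator 1 x)
        (∑' x, up x * (Set.Ioo a t).indicator 1 x)
      linarith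
    have heq2 : up a = (F t - F a) - (F t - F a - up a) := by ring
    calc |up a| = |(F t - F a) - (F t - F a - up a)| := by rw [← heq2]
      _ ≤ |F t - F a| + |F t - F a - up a| := by
          rw [sub_eq_add_neg]
          exact le_of_le_of_eq (abs_add_le _ _) (by rw [abs_neg])
      _ ≤ |F t - F a| + ε₁ / 4 := by linarith
  have hlow : L ≤ eVariationOn F (Set.Ioo l r) + ε := by
    set u : ℕ → ℝ := fun i => if i = 0 then s else if i = 1 then a else t with hudef
    have hu0 : u 0 = s := by simp [hudef]
    have hu1 : u 1 = a := by simp [hudef]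
    have hu2 : u 2 = t := by simp [hudef]
    have humono : Monotone u := monotone_nat_of_le_succ fun i => by
      match i with
      | 0 => rw [hu0, hu1]; exact hsa.le
      | 1 => rw [hu1, hu2]; exact hat.le
      | (k + 2) => simp [hudef]
    have humem : ∀ i, u i ∈ Set.Ioo l r := fun i => by
      match i with
      | 0 => rw [hu0]; exact ⟨hsl, lt_trans hsa har⟩
      | 1 => rw [hu1]; exact ⟨hla, har⟩
      | (k + 2) => simpa [hudef] using ⟨lt_trans hla hat, htr⟩
    have hsum2 := eVariationOn.sum_le (f := F) (n := 2) humono humem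
    have hsumeq : ∑ i ∈ Finset.range 2, edist (F (u (i + 1))) (F (u i))
        = edist (F a) (F s) + edist (F t) (F a) := by
      rw [Finset.sum_range_succ, Finset.sum_range_one, hu0, hu1, hu2]
    rw [hsumeq] at hsum2
    have he1 : edist (F a) (F s) = ENNReal.ofReal |F a - F s| := by
      rw [edist_dist, Real.dist_eq]
    have he2 : edist (F t) (F a) = ENNReal.ofReal |F t - F a| := by
      rw [edist_dist, Real.dist_eq]
    calc L ≤ ENNReal.ofReal ((|F a - F s| + |F t - F a|) + ε₁ / 2) := by
          rw [hL]
          exact ENNReal.ofReal_le_ofReal (by linarith)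
      _ = (ENNReal.ofReal |F a - F s| + ENNReal.ofReal |F t - F a|)
          + ENNReal.ofReal (ε₁ / 2) := by
          rw [← ENNReal.ofReal_add (abs_nonneg _) (abs_nonneg _),
            ← ENNReal.ofReal_add (by positivity) (by linarith)]
      _ = (edist (F a) (F s) + edist (F t) (F a)) + ENNReal.ofReal (ε₁ / 2) := by
          rw [he1, he2]
      _ ≤ eVariationOn F (Set.Ioo l r) + ENNReal.ofReal (ε₁ / 2) :=
          add_le_add_left hsum2 _
      _ ≤ eVariationOn F (Set.Ioo l r) + ε :=
          add_le_add_right (le_trans (ENNReal.ofReal_le_ofReal (by linarith)) hε₁le) _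
  exact Set.mem_Icc.mpr ⟨tsub_le_iff_right.mpr hlow, hupper⟩


end
end
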